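/- arXiv:2103.04393 — 3 statements merged into one kernel-verified Lean document; each statement's English description precedes it below -/
import Mathlib

section
/- Let k ≥ 1 and n ≥ 1 be integers. If μ(n) > k, then every homogeneous polynomial of degree n in P_k is hit; equivalently, the cohit space (QP_k)_n is the zero vector space. -/
open MvPolynomial

/-- `P k` is the polynomial algebra `𝔽₂[x_1, …, x_k]`, graded by total degree. -/
abbrev P (k : ℕ) := MvPolynomial (Fin k) (ZMod 2)

/-- The total Steenrod square: the `𝔽₂`-algebra endomorphism of `P k` determined by
`Sq (x_j) = x_j + x_j ^ 2`. -/
noncomputable def SqTotal (k : ℕ) : P k →ₐ[ZMod 2] P k :=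
  aeval fun j => X j + X j ^ 2

/-- The space of hit polynomials of degree `n` in `P k`: the `𝔽₂`-linear span of the
degree-`n` homogeneous components of the polynomials `Sq g`, where `g` ranges over the
homogeneous polynomials of degree `< n`. -/
noncomputable def hitSubmodule (k n : ℕ) : Submodule (ZMod 2) (P k) :=
  Submodule.span (ZMod 2)
    {f | ∃ m, m < n ∧ ∃ g ∈ homogeneousSubmodule (Fin k) (ZMod 2) m,
      f = homogeneousComponent n (SqTotal k g)}

/-- The span of homogeneous components of all degrees different from `n`. -/
noncomputable def offDegree (k n : ℕ) : Submodule (ZMod 2) (P k) :=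
  ⨆ (m : ℕ) (_ : m ≠ n), homogeneousSubmodule (Fin k) (ZMod 2) m

/-- The submodule of `P k` by which one quotients to get the cohit space in degree `n`.
Since `P k` is the direct sum of its homogeneous components, the quotient
`P k ⧸ hitTotal k n` is canonically identified with the quotient of the space of
homogeneous polynomials of degree `n` by its subspace of hit polynomials. -/
noncomputable def hitTotal (k n : ℕ) : Submodule (ZMod 2) (P k) :=
  hitSubmodule k n ⊔ offDegree k n

/-- The cohit space `(QP_k)_n = (𝔽₂ ⊗_𝒜 P_k)_n`. -/
abbrev QP (k n : ℕ) := P k ⧸ hitTotal k n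

/-- `μ n`: the smallest `r` such that `n` can be written as a sum
`(2^{u_1} - 1) + ⋯ + (2^{u_r} - 1)` with all `u_i > 0`. -/
noncomputable def mu (n : ℕ) : ℕ :=
  sInf {r : ℕ | ∃ u : Fin r → ℕ, (∀ i, 0 < u i) ∧ n = ∑ i, (2 ^ u i - 1)}

/-- Kameko's map `ψ : P k → P k`, the `𝔽₂`-linear map sending a monomial with all
exponents odd, `x_1^{a_1} ⋯ x_k^{a_k}`, to `x_1^{(a_1-1)/2} ⋯ x_k^{(a_k-1)/2}`, and all
other monomials to `0`. -/
noncomputable def psi (k : ℕ) : P k →ₗ[ZMod 2] P k :=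
  (Finsupp.lsum (ZMod 2) fun a : Fin k →₀ ℕ =>
    if ∀ j, Odd (a j) then monomial (a.mapRange (· / 2) (Nat.zero_div 2)) else 0)
    ∘ₗ (AddMonoidAlgebra.coeffLinearEquiv (ZMod 2)).toLinearMap

/-- `κ : (QP_k)_a → (QP_k)_b` is (induced by) Kameko's squaring operation if it commutes
with `ψ` on classes of homogeneous polynomials of degree `a`. -/
def IsKameko (k a b : ℕ) (κ : QP k a →ₗ[ZMod 2] QP k b) : Prop :=
  ∀ f ∈ homogeneousSubmodule (Fin k) (ZMod 2) a,
    κ ((hitTotal k a).mkQ f) = (hitTotal k b).mkQ (psi k f)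

/-- `P_k^0`: the span of the monomials having at least one exponent equal to zero. -/
noncomputable def P0 (k : ℕ) : Submodule (ZMod 2) (P k) :=
  Submodule.span (ZMod 2)
    {f | ∃ a : Fin k →₀ ℕ, (∃ j, a j = 0) ∧ f = monomial a 1}

/-- `P_k^+`: the span of the monomials with all exponents positive. -/
noncomputable def Pplus (k : ℕ) : Submodule (ZMod 2) (P k) :=
  Submodule.span (ZMod 2)
    {f | ∃ a : Fin k →₀ ℕ, (∀ j, a j ≠ 0) ∧ f = monomial a 1}

/-- `(QP_k^0)_n`: the image in `(QP_k)_n` of the degree-`n` homogeneous part of `P_k^0`. -/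
noncomputable def Q0 (k n : ℕ) : Submodule (ZMod 2) (QP k n) :=
  (P0 k ⊓ homogeneousSubmodule (Fin k) (ZMod 2) n).map (hitTotal k n).mkQ

/-- `(QP_k^+)_n`: the image in `(QP_k)_n` of the degree-`n` homogeneous part of `P_k^+`. -/
noncomputable def Qplus (k n : ℕ) : Submodule (ZMod 2) (QP k n) :=
  (Pplus k ⊓ homogeneousSubmodule (Fin k) (ZMod 2) n).map (hitTotal k n).mkQ

/-- The weight vector of a monomial with exponents `a`:
`wtVec k a i` is the number of variables `x_j` such that the `i`-th binary digit of the
exponent `a j` equals `1` (this is `ω_{i+1}` in the 1-indexed notation of the paper). -/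
def wtVec (k : ℕ) (a : Fin k →₀ ℕ) (i : ℕ) : ℕ :=
  (Finset.univ.filter fun j : Fin k => (a j).testBit i).card

/-- Strict left lexicographic order on weight vectors (as functions `ℕ → ℕ`). -/
def lexLt (u v : ℕ → ℕ) : Prop :=
  ∃ i, (∀ j, j < i → u j = v j) ∧ u i < v i

/-- Left lexicographic order on weight vectors. -/
def lexLe (u v : ℕ → ℕ) : Prop :=
  u = v ∨ lexLt u v

/-- A weight vector `(ω_1, ω_2, …)` given as a list, as a function `ℕ → ℕ`
(0-indexed: the value at `i` is `ω_{i+1}`). -/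
def listToFun (L : List ℕ) : ℕ → ℕ := fun i => L.getD i 0

/-- The degree of a weight vector: `deg ω = ∑_{i ≥ 1} 2^{i-1} ω_i`. -/
def degWeight (L : List ℕ) : ℕ :=
  ∑ i ∈ Finset.range L.length, 2 ^ i * L.getD i 0

/-- `P_k(ω)`: the span of the monomials of degree `deg ω` whose weight vector is `≤ ω`. -/
noncomputable def POmega (k : ℕ) (L : List ℕ) : Submodule (ZMod 2) (P k) :=
  Submodule.span (ZMod 2)
    {f | ∃ a : Fin k →₀ ℕ, (a.sum fun _ e => e) = degWeight L ∧
      lexLe (wtVec k a) (listToFun L) ∧ f = monomial a 1}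

/-- `P_k^-(ω)`: the span of the monomials of degree `deg ω` whose weight vector is `< ω`. -/
noncomputable def POmegaLt (k : ℕ) (L : List ℕ) : Submodule (ZMod 2) (P k) :=
  Submodule.span (ZMod 2)
    {f | ∃ a : Fin k →₀ ℕ, (a.sum fun _ e => e) = degWeight L ∧
      lexLt (wtVec k a) (listToFun L) ∧ f = monomial a 1}

/-- The subspace `(H ∩ P_k(ω)) + P_k^-(ω)` of `P_k(ω)`, where `H` is the space of hit
polynomials of degree `deg ω`. -/
noncomputable def NOmega (k : ℕ) (L : List ℕ) : Submodule (ZMod 2) ↥(POmega k L) :=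
  ((hitSubmodule k (degWeight L) ⊓ POmega k L) ⊔ POmegaLt k L).comap (POmega k L).subtype

/-- `QP_k(ω) = P_k(ω) / ((H ∩ P_k(ω)) + P_k^-(ω))`. -/
abbrev QPOmega (k : ℕ) (L : List ℕ) := ↥(POmega k L) ⧸ NOmega k L

/-- The span of the monomials in `P_k(ω)` all of whose exponents are positive. -/
noncomputable def PplusOmega (k : ℕ) (L : List ℕ) : Submodule (ZMod 2) (P k) :=
  Submodule.span (ZMod 2)
    {f | ∃ a : Fin k →₀ ℕ, (a.sum fun _ e => e) = degWeight L ∧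
      lexLe (wtVec k a) (listToFun L) ∧ (∀ j, a j ≠ 0) ∧ f = monomial a 1}

/-- `QP_k^+(ω)`: the image in `QP_k(ω)` of the span of the monomials in `P_k(ω)` all of
whose exponents are positive. -/
noncomputable def QPplusOmega (k : ℕ) (L : List ℕ) : Submodule (ZMod 2) (QPOmega k L) :=
  (((PplusOmega k L).comap (POmega k L).subtype)).map (NOmega k L).mkQ

/-- The generic degree `k(2^s - 1) + 2^s d`. -/
def degseq (k d s : ℕ) : ℕ := k * (2 ^ s - 1) + 2 ^ s * d

/-- `t(k,d) = max {0, k - α(d+k) - ζ(d+k)}`, where `α` is the number of ones in the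
binary expansion and `ζ` is the 2-adic valuation. -/
def tkd (k d : ℕ) : ℕ :=
  k - ((Nat.digits 2 (d + k)).sum + (d + k).factorization 2)

/-- The `j`-fold composite of a family of maps
`κ s : (QP_k)_{n (s+1)} → (QP_k)_{n s}`, going from `(QP_k)_{n (t+j)}` down to
`(QP_k)_{n t}`. -/
noncomputable def iterComp (k : ℕ) (n : ℕ → ℕ)
    (κ : ∀ s, QP k (n (s + 1)) →ₗ[ZMod 2] QP k (n s)) :
    ∀ t j : ℕ, QP k (n (t + j)) →ₗ[ZMod 2] QP k (n t)
  | _, 0 => LinearMap.id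
  | t, j + 1 => (iterComp k n κ t j).comp (κ (t + j))

namespace Statement0Aux

variable {k : ℕ}

lemma degree_eq_sum_univ (c : Fin k →₀ ℕ) : c.degree = ∑ j, c j :=
  Finset.sum_subset (Finset.subset_univ _)
    (fun j _ hj => Finsupp.notMem_support_iff.mp hj)

lemma degree_add (u v : Fin k →₀ ℕ) : (u + v).degree = u.degree + v.degree := by
  simp [degree_eq_sum_univ, Finset.sum_add_distrib]

lemma degree_single (j : Fin k) (e : ℕ) : (Finsupp.single j e).degree = e := by
  simp [degree_eq_sum_univ, Finsupp.single_apply]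

lemma degree_sum_single (T : Finset (Fin k)) (e : Fin k → ℕ) :
    (∑ j ∈ T, Finsupp.single j (e j)).degree = ∑ j ∈ T, e j := by
  induction T using Finset.cons_induction with
  | empty => simp
  | cons a s ha ih => rw [Finset.sum_cons, Finset.sum_cons, degree_add, degree_single, ih]

lemma coeff_ne_zero_degree_le {p : P k} {u : Fin k →₀ ℕ} (h : coeff u p ≠ 0) :
    u.degree ≤ p.totalDegree :=
  le_totalDegree (mem_support_iff.mpr h)

/-- Top homogeneous components multiply. -/
lemma hC_mul (p q : P k) {dp dq : ℕ} (hp : p.totalDegree ≤ dp) (hq : q.totalDegree ≤ dq) :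
    homogeneousComponent (dp + dq) (p * q)
      = homogeneousComponent dp p * homogeneousComponent dq q := by
  ext d
  rw [coeff_homogeneousComponent]
  split_ifs with hd
  · rw [coeff_mul, coeff_mul]
    apply Finset.sum_congr rfl
    rintro ⟨u, v⟩ huv
    rw [Finset.HasAntidiagonal.mem_antidiagonal] at huv
    dsimp only at huv ⊢
    have hdeg : u.degree + v.degree = dp + dq := by rw [← degree_add, huv, hd]
    rw [coeff_homogeneousComponent, coeff_homogeneousComponent]
    by_cases h1 : u.degree = dp
    · rw [if_pos h1, if_pos (by omega)]
    · rw [if_neg h1]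
      rcases lt_or_gt_of_ne h1 with hlt | hgt
      · have hv : coeff v q = 0 := by
          by_contra hne
          have := coeff_ne_zero_degree_le hne
          omega
        simp [hv]
      · have hu : coeff u p = 0 := by
          by_contra hne
          have := coeff_ne_zero_degree_le hne
          omega
        simp [hu]
  · have h1 := (mem_homogeneousSubmodule _ _).mp (homogeneousComponent_mem dp p)
    have h2 := (mem_homogeneousSubmodule _ _).mp (homogeneousComponent_mem dq q)
    exact ((h1.mul h2).coeff_eq_zero hd).symm

lemma hC_monomial_mul_eq_zero {n : ℕ} (c : Fin k →₀ ℕ) (r : ZMod 2) (q : P k)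
    (h : n < c.degree) :
    homogeneousComponent n (monomial c r * q) = 0 := by
  by_cases hr : r = 0
  · simp [hr]
  apply homogeneousComponent_eq_zero'
  intro d hd
  obtain ⟨y, hy, z, hz, rfl⟩ := Finset.mem_add.mp (support_mul _ _ hd)
  rw [support_monomial, if_neg hr, Finset.mem_singleton] at hy
  subst hy
  rw [degree_add]
  omega

lemma Sq_monomial_eq (c : Fin k →₀ ℕ) (r : ZMod 2) :
    SqTotal k (monomial c r)
      = monomial c r * ∏ j ∈ c.support, ((1 : P k) + X j) ^ c j := by
  rw [SqTotal, aeval_monomial, algebraMap_eq]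
  have h1 : ∀ j ∈ c.support, ((X j : P k) + X j ^ 2) ^ c j
      = X j ^ c j * ((1 : P k) + X j) ^ c j := by
    intro j _
    rw [← mul_pow]
    ring_nf
  rw [Finsupp.prod, Finset.prod_congr rfl h1, Finset.prod_mul_distrib, monomial_eq,
    Finsupp.prod]
  ring

lemma hC_Sq_monomial_mem {n : ℕ} (c : Fin k →₀ ℕ) (r : ZMod 2) (hc : c.degree ≠ n) :
    homogeneousComponent n (SqTotal k (monomial c r)) ∈ hitSubmodule k n := by
  rcases lt_or_gt_of_ne hc with hlt | hgt
  · exact Submodule.subset_span ⟨c.degree, hlt, monomial c r,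
      (mem_homogeneousSubmodule _ _).mpr (isHomogeneous_monomial r rfl), rfl⟩
  · rw [Sq_monomial_eq, hC_monomial_mul_eq_zero _ _ _ hgt]
    exact Submodule.zero_mem _

lemma hC_Sq_mem {n : ℕ} (g : P k) (hg : ∀ c ∈ g.support, Finsupp.degree c ≠ n) :
    homogeneousComponent n (SqTotal k g) ∈ hitSubmodule k n := by
  have hrepr : g = ∑ c ∈ g.support, monomial c (coeff c g) :=
    (support_sum_monomial_coeff g).symm
  rw [hrepr, map_sum, map_sum]
  exact Submodule.sum_mem _ fun c hcs => hC_Sq_monomial_mem c _ (hg c hcs)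

lemma telescope (j : Fin k) (N : ℕ) :
    ∑ i ∈ Finset.range (N + 1), ((X j : P k) + X j ^ 2) ^ 2 ^ i
      = X j + X j ^ 2 ^ (N + 1) := by
  induction N with
  | zero => norm_num
  | succ N ih =>
    rw [Finset.sum_range_succ, ih, add_pow_char_pow]
    have h2 : ((X j : P k) ^ 2) ^ 2 ^ (N + 1) = X j ^ 2 ^ (N + 2) := by
      rw [← pow_mul]
      congr 1
      rw [pow_succ 2 (N+1)]
      ring
    rw [h2]
    have h3 : ((X j : P k) ^ 2 ^ (N + 1)) + X j ^ 2 ^ (N + 1) = 0 :=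
      CharTwo.add_self_eq_zero _
    linear_combination h3

lemma prod_X_pow (T : Finset (Fin k)) (e : Fin k → ℕ) :
    (∏ j ∈ T, (X j : P k) ^ e j) = monomial (∑ j ∈ T, Finsupp.single j (e j)) 1 := by
  induction T using Finset.cons_induction with
  | empty => simp
  | cons a s ha ih =>
    rw [Finset.prod_cons, ih, X_pow_eq_monomial, monomial_mul, one_mul, Finset.sum_cons]

lemma totalDegree_sq_factor (j : Fin k) : ((X j : P k) + X j ^ 2).totalDegree ≤ 2 := by
  refine le_trans (totalDegree_add _ _) ?_
  simp [totalDegree_X_pow]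

lemma hC_pow_top (j : Fin k) (c : ℕ) :
    homogeneousComponent (2 * c) (((X j : P k) + X j ^ 2) ^ c) = X j ^ (2 * c) := by
  induction c with
  | zero => simp
  | succ c ih =>
    have h1 : (((X j : P k) + X j ^ 2) ^ c).totalDegree ≤ 2 * c := by
      refine le_trans (totalDegree_pow _ _) ?_
      have := totalDegree_sq_factor j
      nlinarith
    have h2 := totalDegree_sq_factor j
    rw [pow_succ, show 2 * (c + 1) = 2 * c + 2 by ring, hC_mul _ _ h1 h2, ih]
    have hX : homogeneousComponent 2 (X j : P k) = 0 := by
      rw [homogeneousComponent_of_mem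
        ((mem_homogeneousSubmodule _ _).mpr (isHomogeneous_X _ _)), if_neg (by norm_num)]
    have hX2 : homogeneousComponent 2 ((X j : P k) ^ 2) = X j ^ 2 := by
      rw [homogeneousComponent_of_mem ((mem_homogeneousSubmodule _ _).mpr
        (by rw [X_pow_eq_monomial]; exact isHomogeneous_monomial _ (degree_single j 2))),
        if_pos rfl]
    rw [map_add, hX, hX2, zero_add, ← pow_add]

lemma hC_prod_top (F : Finset (Fin k)) (e : Fin k → ℕ) :
    homogeneousComponent (2 * ∑ j ∈ F, e j) (∏ j ∈ F, ((X j : P k) + X j ^ 2) ^ e j)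
      = ∏ j ∈ F, (X j : P k) ^ (2 * e j) := by
  induction F using Finset.cons_induction with
  | empty => simp
  | cons a s ha ih =>
    have h1 : (((X a : P k) + X a ^ 2) ^ e a).totalDegree ≤ 2 * e a := by
      refine le_trans (totalDegree_pow _ _) ?_
      have := totalDegree_sq_factor a
      nlinarith
    have h2 : (∏ j ∈ s, ((X j : P k) + X j ^ 2) ^ e j).totalDegree ≤ 2 * ∑ j ∈ s, e j := by
      refine le_trans (totalDegree_finset_prod _ _) ?_
      rw [Finset.mul_sum]
      refine Finset.sum_le_sum fun j _ => ?_
      refine le_trans (totalDegree_pow _ _) ?_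
      have := totalDegree_sq_factor j
      nlinarith
    rw [Finset.sum_cons, Finset.prod_cons, Finset.prod_cons, mul_add,
      hC_mul _ _ h1 h2, hC_pow_top, ih]


lemma monomial_mem_hit {n : ℕ} (h : k < mu n) (a : Fin k →₀ ℕ) (ha : a.degree = n) :
    monomial a (1 : ZMod 2) ∈ hitSubmodule k n := by
  classical
  set S : Finset (Fin k) := Finset.univ.filter fun j => Odd (a j) with hS
  set d := S.card with hd
  set b : Fin k →₀ ℕ := a.mapRange (· / 2) (Nat.zero_div 2) with hb
  set m := b.degree with hm
  have hbj : ∀ j, b j = a j / 2 := fun j => Finsupp.mapRange_apply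
  have hmS : ∀ j : Fin k, (j ∈ S ↔ Odd (a j)) := by
    intro j; rw [hS, Finset.mem_filter]; simp
  have key : ∀ j, a j = (if Odd (a j) then 1 else 0) + 2 * (a j / 2) := by
    intro j
    by_cases ho : Odd (a j)
    · rw [if_pos ho]
      have h1 : a j % 2 = 1 := Nat.odd_iff.mp ho
      omega
    · rw [if_neg ho]
      have h1 : a j % 2 = 0 := Nat.not_odd_iff.mp ho
      omega
  have hn2 : n = d + 2 * m := by
    rw [← ha, degree_eq_sum_univ]
    have h1 : ∑ j, a j = ∑ j, ((if Odd (a j) then 1 else 0) + 2 * (a j / 2)) :=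
      Finset.sum_congr rfl fun j _ => key j
    rw [h1, Finset.sum_add_distrib, ← Finset.mul_sum]
    congr 1
    · rw [hd, hS, Finset.card_filter]
    · congr 1
      rw [hm, degree_eq_sum_univ]
      exact Finset.sum_congr rfl fun j _ => by rw [hbj j]
  have hdk : d ≤ k := by
    rw [hd, hS]
    calc (Finset.univ.filter fun j => Odd (a j)).card ≤ Finset.univ.card :=
        Finset.card_filter_le _ _
      _ = k := by simp
  have Hne : ∀ t : Fin k → ℕ, ∑ j ∈ S, 2 ^ t j ≠ d + m := by
    intro t ht
    have hmu : mu n ≤ d := by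
      apply Nat.sInf_le
      refine ⟨fun i => t ((S.equivFin.symm i) : Fin k) + 1, fun i => Nat.succ_pos _, ?_⟩
      have h1 : ∑ i : Fin d, (2 ^ (t ((S.equivFin.symm i) : Fin k) + 1) - 1)
          = ∑ x ∈ S, (2 ^ (t x + 1) - 1) := by
        rw [← Finset.sum_coe_sort S (fun x => 2 ^ (t x + 1) - 1)]
        exact Equiv.sum_comp S.equivFin.symm (fun x : S => 2 ^ (t (x : Fin k) + 1) - 1)
      have h2 : ∑ j ∈ S, (2 ^ (t j + 1) - 1) + S.card = ∑ j ∈ S, 2 ^ (t j + 1) := by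
        rw [Finset.card_eq_sum_ones, ← Finset.sum_add_distrib]
        refine Finset.sum_congr rfl fun j _ => ?_
        have h5 : (1:ℕ) ≤ 2 ^ (t j + 1) := Nat.one_le_two_pow
        omega
      have h3 : ∑ j ∈ S, 2 ^ (t j + 1) = 2 * (d + m) := by
        rw [← ht, Finset.mul_sum]
        exact Finset.sum_congr rfl fun j _ => by rw [pow_succ]; ring
      rw [h1]
      rw [← hd] at h2
      omega
    omega
  set N := n with hN
  set Y : P k := ∏ j ∈ S, ∑ i ∈ Finset.range (N + 1), (X j : P k) ^ 2 ^ i with hY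
  have Ysupp : ∀ (F : Finset (Fin k)),
      ∀ c ∈ (∏ j ∈ F, ∑ i ∈ Finset.range (N + 1), (X j : P k) ^ 2 ^ i).support,
      ∃ t : Fin k → ℕ, Finsupp.degree c = ∑ j ∈ F, 2 ^ t j := by
    intro F
    induction F using Finset.cons_induction with
    | empty =>
      intro c hc
      rw [Finset.prod_empty] at hc
      have hc0 : c = 0 := by
        by_contra h0
        have h1 := mem_support_iff.mp hc
        rw [coeff_one, if_neg (fun h2 => h0 h2.symm)] at h1
        exact h1 rfl
      exact ⟨0, by simp [hc0]⟩
    | cons a' F' ha' ih =>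
      intro c hc
      rw [Finset.prod_cons] at hc
      obtain ⟨y, hy, z, hz, rfl⟩ := Finset.mem_add.mp (support_mul _ _ hc)
      have h1 := mem_support_iff.mp hy
      rw [coeff_sum] at h1
      obtain ⟨i, _, hci⟩ := Finset.exists_ne_zero_of_sum_ne_zero h1
      have hy2 : y = Finsupp.single a' (2 ^ i) := by
        rw [coeff_X_pow] at hci
        by_contra hne
        rw [if_neg (fun h2 => hne h2.symm)] at hci
        exact hci rfl
      obtain ⟨t, htz⟩ := ih z hz
      refine ⟨Function.update t a' i, ?_⟩
      rw [degree_add, Finset.sum_cons, hy2, degree_single, htz, Function.update_self]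
      congr 1
      exact Finset.sum_congr rfl fun j hj =>
        by rw [Function.update_of_ne (fun h2 => ha' (by rw [← h2]; exact hj)) i t]
  set g : P k := Y * monomial b (1 : ZMod 2) with hg
  have hsupp : ∀ c ∈ g.support, Finsupp.degree c ≠ n := by
    intro c hc hcn
    rw [hg] at hc
    obtain ⟨y, hy, z, hz, rfl⟩ := Finset.mem_add.mp (support_mul _ _ hc)
    have hzb : z = b := by
      rw [support_monomial, if_neg one_ne_zero, Finset.mem_singleton] at hz
      exact hz
    obtain ⟨t, hty⟩ := Ysupp S y hy
    subst hzb
    rw [degree_add, hty, ← hm] at hcn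
    exact Hne t (by omega)
  -- the value computation
  have hSqX : ∀ j : Fin k, SqTotal k (X j) = X j + X j ^ 2 := fun j => aeval_X _ j
  have hSqY : SqTotal k Y = ∏ j ∈ S, ((X j : P k) + X j ^ 2 ^ (N + 1)) := by
    rw [hY, map_prod]
    refine Finset.prod_congr rfl fun j _ => ?_
    rw [map_sum]
    have h1 : ∀ i ∈ Finset.range (N + 1),
        SqTotal k ((X j : P k) ^ 2 ^ i) = ((X j : P k) + X j ^ 2) ^ 2 ^ i := by
      intro i _
      rw [map_pow, hSqX]
    rw [Finset.sum_congr rfl h1, telescope]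
  have hSqv : SqTotal k (monomial b (1 : ZMod 2))
      = ∏ j ∈ b.support, ((X j : P k) + X j ^ 2) ^ b j := by
    rw [SqTotal, aeval_monomial, Finsupp.prod]
    simp only [map_one, one_mul]
  have hTD : (SqTotal k (monomial b (1 : ZMod 2))).totalDegree ≤ 2 * m := by
    rw [hSqv]
    refine le_trans (totalDegree_finset_prod _ _) ?_
    have h1 : ∀ j ∈ b.support, (((X j : P k) + X j ^ 2) ^ b j).totalDegree ≤ 2 * b j := by
      intro j _
      refine le_trans (totalDegree_pow _ _) ?_
      have := totalDegree_sq_factor j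
      nlinarith
    refine le_trans (Finset.sum_le_sum h1) ?_
    rw [← Finset.mul_sum]
    exact le_of_eq rfl
  have hCSqv : homogeneousComponent (2 * m) (SqTotal k (monomial b (1 : ZMod 2)))
      = monomial (∑ j ∈ b.support, Finsupp.single j (2 * b j)) 1 := by
    rw [hSqv]
    have h1 := hC_prod_top b.support (fun j => b j)
    rw [show (2 * m) = 2 * ∑ j ∈ b.support, b j from rfl, h1,
      prod_X_pow b.support (fun j => 2 * b j)]
  have hval : homogeneousComponent n (SqTotal k g) = monomial a 1 := by
    rw [hg, map_mul, hSqY, Finset.prod_add, Finset.sum_mul, map_sum]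
    rw [Finset.sum_eq_single S]
    · rw [Finset.sdiff_self, Finset.prod_empty, mul_one]
      have hu : (∏ j ∈ S, (X j : P k)) = monomial (∑ j ∈ S, Finsupp.single j 1) 1 := by
        rw [← prod_X_pow S (fun _ => 1)]
        exact Finset.prod_congr rfl fun j _ => (pow_one _).symm
      rw [hu]
      have hud : (monomial (∑ j ∈ S, Finsupp.single j 1) (1 : ZMod 2)).totalDegree ≤ d := by
        rw [totalDegree_monomial _ one_ne_zero]
        have : (∑ j ∈ S, Finsupp.single j 1).degree = d := by
          rw [degree_sum_single]; simp [hd]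
        exact le_of_eq this
      have h2 := hC_mul (monomial (∑ j ∈ S, Finsupp.single j 1) (1 : ZMod 2))
        (SqTotal k (monomial b (1 : ZMod 2))) hud hTD
      rw [show n = d + 2 * m from hn2, h2, hCSqv,
        homogeneousComponent_of_mem ((mem_homogeneousSubmodule _ _).mpr
          (isHomogeneous_monomial _ (show (∑ j ∈ S, Finsupp.single j 1).degree = d by
            rw [degree_sum_single]; simp [hd]))),
        if_pos rfl, monomial_mul, one_mul]
      have hca : ((∑ j ∈ S, Finsupp.single j 1) + ∑ j ∈ b.support, Finsupp.single j (2 * b j))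
          = a := by
        ext j
        rw [Finsupp.add_apply, Finsupp.finset_sum_apply, Finsupp.finset_sum_apply]
        simp only [Finsupp.single_apply]
        rw [Finset.sum_ite_eq' S j (fun _ => 1),
          Finset.sum_ite_eq' b.support j (fun x => 2 * b x)]
        have h3 : (if j ∈ b.support then 2 * b j else 0) = 2 * b j := by
          split_ifs with h4
          · rfl
          · rw [Finsupp.notMem_support_iff.mp h4, Nat.mul_zero]
        rw [h3, hbj j]
        by_cases hjS : j ∈ S
        · rw [if_pos hjS]
          have h5 := Nat.odd_iff.mp ((hmS j).mp hjS)
          omega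
        · rw [if_neg hjS]
          have h5 := Nat.not_odd_iff.mp (fun ho => hjS ((hmS j).mpr ho))
          omega
      rw [hca]
    · intro T hT hTne
      have hTsub : T ⊆ S := Finset.mem_powerset.mp hT
      have hne : (S \ T).Nonempty := by
        rw [Finset.sdiff_nonempty]
        intro hsub
        exact hTne (Finset.Subset.antisymm hTsub hsub)
      have h1 : (∏ j ∈ T, (X j : P k)) = monomial (∑ j ∈ T, Finsupp.single j 1) 1 := by
        rw [← prod_X_pow T (fun _ => 1)]
        exact Finset.prod_congr rfl fun j _ => (pow_one _).symm
      have h2 : (∏ j ∈ S \ T, (X j : P k) ^ 2 ^ (N + 1))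
          = monomial (∑ j ∈ S \ T, Finsupp.single j (2 ^ (N + 1))) 1 :=
        prod_X_pow _ _
      rw [h1, h2, monomial_mul, one_mul]
      apply hC_monomial_mul_eq_zero
      rw [degree_add, degree_sum_single, degree_sum_single]
      obtain ⟨j0, hj0⟩ := hne
      have h4 : 2 ^ (N + 1) ≤ ∑ j ∈ S \ T, 2 ^ (N + 1) :=
        Finset.single_le_sum (f := fun _ : Fin k => 2 ^ (N + 1))
          (fun i _ => Nat.zero_le _) hj0
      have h5 : n < 2 ^ N := by rw [hN]; exact Nat.lt_two_pow_self
      omega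
    · intro hS'
      exact absurd (Finset.mem_powerset.mpr (Finset.Subset.refl S)) hS'
  rw [← hval]
  exact hC_Sq_mem g hsupp

end Statement0Aux

/-- Wood's theorem / Peterson conjecture. If `μ(n) > k`, then every
homogeneous polynomial of degree `n` in `P_k` is hit; equivalently, the cohit space
`(QP_k)_n` is the zero vector space. -/
theorem statement0 (k n : ℕ) (hk : 1 ≤ k) (hn : 1 ≤ n) (h : k < mu n) :
    (∀ f ∈ homogeneousSubmodule (Fin k) (ZMod 2) n, f ∈ hitSubmodule k n) ∧
    Subsingleton (QP k n) := by
  have main : ∀ f ∈ homogeneousSubmodule (Fin k) (ZMod 2) n, f ∈ hitSubmodule k n := by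
    intro f hf
    rw [mem_homogeneousSubmodule] at hf
    have hrepr : f = ∑ c ∈ f.support, monomial c (coeff c f) :=
      (support_sum_monomial_coeff f).symm
    rw [hrepr]
    refine Submodule.sum_mem _ fun c hc => ?_
    have hdc : c.degree = n := by
      by_contra hne
      exact mem_support_iff.mp hc (hf.coeff_eq_zero hne)
    have hmono : monomial c (coeff c f) = (coeff c f) • monomial c (1 : ZMod 2) := by
      rw [smul_monomial, smul_eq_mul, mul_one]
    rw [hmono]
    exact Submodule.smul_mem _ _ (Statement0Aux.monomial_mem_hit h c hdc)
  refine ⟨main, ?_⟩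
  rw [Submodule.Quotient.subsingleton_iff, eq_top_iff]
  intro p _
  show p ∈ hitSubmodule k n ⊔ offDegree k n
  have hrepr : p = ∑ i ∈ Finset.range (p.totalDegree + 1), homogeneousComponent i p :=
    (sum_homogeneousComponent p).symm
  rw [hrepr]
  refine Submodule.sum_mem _ fun i _ => ?_
  by_cases hi : i = n
  · subst hi
    exact Submodule.mem_sup_left (main _ (homogeneousComponent_mem _ _))
  · refine Submodule.mem_sup_right ?_
    have hle : homogeneousSubmodule (Fin k) (ZMod 2) i ≤ offDegree k n :=
      le_iSup₂ (f := fun m (_ : m ≠ n) => homogeneousSubmodule (Fin k) (ZMod 2) m) i hi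
    exact hle (homogeneousComponent_mem _ _)
end

section
/- Let k ≥ 1 and d ≥ 0 be integers. The map ψ sends every hit homogeneous polynomial of degree 2d+k in P_k to a hit homogeneous polynomial of degree d, and hence induces an 𝔽₂-linear map (S̃q⁰_*)_{(k,d)} : (QP_k)_{2d+k} → (QP_k)_d. Moreover, if μ(2d+k) = k, then this induced map is an isomorphism of 𝔽₂-vector spaces. -/
open MvPolynomial

section Aux
variable {k : ℕ}

/-- double-plus-one of an exponent vector -/
noncomputable def dbl1 (b : Fin k →₀ ℕ) : Fin k →₀ ℕ :=
  Finsupp.equivFunOnFinite.symm (fun j => 2 * b j + 1)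

@[simp] lemma dbl1_apply (b : Fin k →₀ ℕ) (j : Fin k) : dbl1 b j = 2 * b j + 1 := rfl

/-- halving of an exponent vector -/
noncomputable def hlf (a : Fin k →₀ ℕ) : Fin k →₀ ℕ := a.mapRange (· / 2) (Nat.zero_div 2)

@[simp] lemma hlf_apply (a : Fin k →₀ ℕ) (j : Fin k) : hlf a j = a j / 2 :=
  Finsupp.mapRange_apply

lemma hlf_dbl1 (b : Fin k →₀ ℕ) : hlf (dbl1 b) = b := by
  ext j; simp only [hlf_apply, dbl1_apply]; omega

lemma dbl1_hlf {a : Fin k →₀ ℕ} (h : ∀ j, Odd (a j)) : dbl1 (hlf a) = a := by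
  ext j; have := (h j); rw [Nat.odd_iff] at this
  simp only [hlf_apply, dbl1_apply]; omega

lemma dbl1_odd (b : Fin k →₀ ℕ) (j : Fin k) : Odd (dbl1 b j) := by
  simp only [dbl1_apply, Nat.odd_iff]; omega

lemma deg_univ (a : Fin k →₀ ℕ) : a.degree = ∑ j, a j := by
  rw [Finsupp.degree]
  refine Finset.sum_subset (Finset.subset_univ _) (fun x _ hx => ?_)
  simpa [Finsupp.mem_support_iff] using hx

lemma deg_add (a b : Fin k →₀ ℕ) : (a + b).degree = a.degree + b.degree := by
  simp [deg_univ, Finset.sum_add_distrib]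

lemma deg_single (j : Fin k) (m : ℕ) : (Finsupp.single j m).degree = m := by
  rw [deg_univ]
  rw [Finset.sum_eq_single j (fun b _ hb => Finsupp.single_eq_of_ne' (Ne.symm hb))
    (fun h => absurd (Finset.mem_univ j) h)]
  simp

lemma deg_dbl1 (b : Fin k →₀ ℕ) : (dbl1 b).degree = 2 * b.degree + k := by
  simp only [deg_univ, dbl1_apply]
  rw [Finset.sum_add_distrib, ← Finset.mul_sum]
  simp

lemma psi_monomial (a : Fin k →₀ ℕ) (r : ZMod 2) :
    psi k (monomial a r) = if ∀ j, Odd (a j) then monomial (hlf a) r else 0 := by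
  have : psi k (monomial a r)
      = (if ∀ j, Odd (a j) then monomial (hlf a) else (0 : ZMod 2 →ₗ[ZMod 2] P k)) r := by
    rw [psi, LinearMap.comp_apply, LinearEquiv.coe_coe]
    have hc : AddMonoidAlgebra.coeffLinearEquiv (ZMod 2) (monomial a r : P k) = Finsupp.single a r := by
      simp [AddMonoidAlgebra.coeffLinearEquiv, monomial]
    rw [hc]
    exact Finsupp.lsum_single (ZMod 2) _ a r
  rw [this]
  split_ifs <;> simp

lemma coeff_psi (p : P k) (b : Fin k →₀ ℕ) :
    coeff b (psi k p) = coeff (dbl1 b) p := by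
  induction p using MvPolynomial.induction_on' with
  | monomial a r =>
    rw [psi_monomial]
    split_ifs with h
    · rw [coeff_monomial, coeff_monomial]
      by_cases hab : a = dbl1 b
      · subst hab; rw [if_pos (hlf_dbl1 b), if_pos rfl]
      · rw [if_neg (fun hh => hab (by rw [← hh, dbl1_hlf h])), if_neg hab]
    · rw [coeff_zero, coeff_monomial, if_neg]
      intro hab
      exact h (by rw [hab]; exact dbl1_odd b)
  | add p q hp hq => simp [hp, hq]

lemma psi_eq_zero_of_even {p : P k} (h : ∀ e ∈ p.support, ∃ j, ¬ Odd (e j)) :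
    psi k p = 0 := by
  ext b
  rw [coeff_psi, coeff_zero]
  by_contra hc
  obtain ⟨j, hj⟩ := h _ (by simpa [Finsupp.mem_support_iff] using hc)
  exact hj (dbl1_odd b j)

end Aux

section Homog
variable {k : ℕ}

lemma isHomog_def {p : P k} {m : ℕ} (h : ∀ e, coeff e p ≠ 0 → e.degree = m) :
    p.IsHomogeneous m := by
  intro e he
  have := h e he
  rw [Finsupp.degree_eq_weight_one] at this
  exact this

lemma deg_of_homog {p : P k} {m : ℕ} (h : p.IsHomogeneous m) {e : Fin k →₀ ℕ}
    (he : coeff e p ≠ 0) : e.degree = m := by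
  rw [Finsupp.degree_eq_weight_one]; exact h he

lemma psi_homog {p : P k} {m : ℕ} (h : p.IsHomogeneous m) (hp : psi k p ≠ 0) :
    ∃ m', m = 2 * m' + k ∧ (psi k p).IsHomogeneous m' := by
  obtain ⟨b0, hb0⟩ := ne_zero_iff.mp hp
  rw [coeff_psi] at hb0
  have hd0 : (dbl1 b0).degree = m := deg_of_homog h hb0
  rw [deg_dbl1] at hd0
  refine ⟨b0.degree, hd0.symm, isHomog_def (fun b hb => ?_)⟩
  rw [coeff_psi] at hb
  have := deg_of_homog h hb
  rw [deg_dbl1] at this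
  omega

/-- homogeneous component of a homogeneous polynomial -/
lemma hc_of_homog {p : P k} {m : ℕ} (h : p.IsHomogeneous m) (n : ℕ) :
    homogeneousComponent n p = if n = m then p else 0 := by
  ext e
  rw [coeff_homogeneousComponent]
  split_ifs with h1 h2 h2
  · rfl
  · rw [coeff_zero]
    exact h.coeff_eq_zero (fun hh => h2 (by rw [← h1]; exact hh))
  · symm
    exact h.coeff_eq_zero (fun hh => h1 (by rw [hh, h2]))
  · simp

lemma supp_hc_subset (n : ℕ) (p : P k) :
    (homogeneousComponent n p).support ⊆ p.support := by
  intro e he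
  rw [MvPolynomial.mem_support_iff] at he ⊢
  rw [coeff_homogeneousComponent] at he
  intro hc
  apply he
  split_ifs <;> simp [hc]

lemma supp_deg_le {p : P k} {e : Fin k →₀ ℕ} (he : e ∈ p.support) :
    e.degree ≤ p.totalDegree := by
  apply Finset.le_sup he

/-- commutation of psi with homogeneous components -/
lemma psi_hc (v : P k) (d : ℕ) :
    psi k (homogeneousComponent (2 * d + k) v) = homogeneousComponent d (psi k v) := by
  ext b
  rw [coeff_psi, coeff_homogeneousComponent, coeff_homogeneousComponent, coeff_psi,
    deg_dbl1]
  by_cases hb : b.degree = d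
  · rw [if_pos (by omega), if_pos hb]
  · rw [if_neg (by omega), if_neg hb]

end Homog

section Comp
variable {k : ℕ}

lemma sum_sq (s : Finset (Fin k →₀ ℕ)) (f : (Fin k →₀ ℕ) → P k) :
    (∑ e ∈ s, f e) ^ 2 = ∑ e ∈ s, (f e) ^ 2 := by
  induction s using Finset.induction_on with
  | empty => simp
  | insert x t hx ih =>
    rw [Finset.sum_insert hx, Finset.sum_insert hx, add_pow_char, ih]

lemma sq_decomp (q : P k) :
    q ^ 2 = ∑ i ∈ Finset.range (q.totalDegree + 1), (homogeneousComponent i q) ^ 2 := by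
  conv_lhs => rw [← sum_homogeneousComponent q]
  induction (Finset.range (q.totalDegree + 1)) using Finset.induction_on with
  | empty => simp
  | insert x t hx ih =>
    rw [Finset.sum_insert hx, Finset.sum_insert hx, add_pow_char, ih]

lemma hc_mul_homog {z : P k} {m : ℕ} (hz : z.IsHomogeneous m) (p : P k) (c : ℕ) :
    homogeneousComponent (c + m) (p * z) = homogeneousComponent c p * z := by
  conv_lhs => rw [← sum_homogeneousComponent p, Finset.sum_mul, map_sum]
  have heach : ∀ i, homogeneousComponent (c + m) (homogeneousComponent i p * z)
      = if i = c then homogeneousComponent i p * z else 0 := by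
    intro i
    rw [hc_of_homog ((homogeneousComponent_isHomogeneous i p).mul hz)]
    by_cases hic : i = c
    · rw [if_pos hic, if_pos (by omega)]
    · rw [if_neg hic, if_neg (by omega)]
  rw [Finset.sum_congr rfl (fun i _ => heach i), Finset.sum_ite_eq']
  split_ifs with hin
  · rfl
  · rw [Finset.mem_range, not_lt] at hin
    rw [homogeneousComponent_eq_zero c p (by omega), zero_mul]

lemma hc_homog_mul {z : P k} {m : ℕ} (hz : z.IsHomogeneous m) (p : P k) (c : ℕ) :
    homogeneousComponent (m + c) (z * p) = z * homogeneousComponent c p := by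
  rw [mul_comm, add_comm, hc_mul_homog hz, mul_comm]

lemma hc_sq (q : P k) (d : ℕ) :
    homogeneousComponent (2 * d) (q ^ 2) = (homogeneousComponent d q) ^ 2 := by
  rw [sq_decomp q, map_sum]
  have heach : ∀ i, homogeneousComponent (2 * d) ((homogeneousComponent i q) ^ 2)
      = if i = d then (homogeneousComponent i q) ^ 2 else 0 := by
    intro i
    have : ((homogeneousComponent i q) ^ 2).IsHomogeneous (i + i) := by
      rw [pow_two]
      exact (homogeneousComponent_isHomogeneous i q).mul (homogeneousComponent_isHomogeneous i q)
    rw [hc_of_homog this]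
    by_cases hic : i = d
    · rw [if_pos hic, if_pos (by omega)]
    · rw [if_neg hic, if_neg (by omega)]
  rw [Finset.sum_congr rfl (fun i _ => heach i), Finset.sum_ite_eq']
  split_ifs with hin
  · rfl
  · rw [Finset.mem_range, not_lt] at hin
    rw [homogeneousComponent_eq_zero d q (by omega)]
    simp

lemma supp_sub_hc_lt {p : P k} {c : ℕ} (hp : p.totalDegree ≤ c) :
    ∀ e ∈ (p - homogeneousComponent c p).support, e.degree < c := by
  intro e he
  rw [MvPolynomial.mem_support_iff, coeff_sub, coeff_homogeneousComponent] at he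
  by_cases hd : e.degree = c
  · rw [if_pos hd] at he; simp at he
  · rw [if_neg hd, sub_zero] at he
    exact lt_of_le_of_ne (le_trans (supp_deg_le (MvPolynomial.mem_support_iff.mpr he)) hp) hd

lemma supp_hc_deg {p : P k} {c : ℕ} {e : Fin k →₀ ℕ}
    (he : e ∈ (homogeneousComponent c p).support) : e.degree = c := by
  rw [MvPolynomial.mem_support_iff, coeff_homogeneousComponent] at he
  by_cases hd : e.degree = c
  · exact hd
  · rw [if_neg hd] at he; simp at he

lemma hc_top_mul {p q : P k} {c d : ℕ} (hp : p.totalDegree ≤ c) (hq : q.totalDegree ≤ d) :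
    homogeneousComponent (c + d) (p * q)
      = homogeneousComponent c p * homogeneousComponent d q := by
  set P1 := homogeneousComponent c p with hP1
  set Q1 := homogeneousComponent d q with hQ1
  have key : p * q = (p - P1) * q + P1 * (q - Q1) + P1 * Q1 := by ring
  rw [key, map_add, map_add]
  have h1 : homogeneousComponent (c + d) ((p - P1) * q) = 0 := by
    apply homogeneousComponent_eq_zero'
    intro e he
    obtain ⟨e1, he1, e2, he2, hee⟩ := Finset.mem_add.mp (support_mul _ _ he)
    have := supp_sub_hc_lt hp e1 he1
    have h2' := le_trans (supp_deg_le he2) hq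
    rw [← hee, deg_add]; omega
  have h2 : homogeneousComponent (c + d) (P1 * (q - Q1)) = 0 := by
    apply homogeneousComponent_eq_zero'
    intro e he
    obtain ⟨e1, he1, e2, he2, hee⟩ := Finset.mem_add.mp (support_mul _ _ he)
    have := supp_hc_deg he1
    have := supp_sub_hc_lt hq e2 he2
    rw [← hee, deg_add]; omega
  have h3 : homogeneousComponent (c + d) (P1 * Q1) = P1 * Q1 := by
    rw [hc_of_homog ((homogeneousComponent_isHomogeneous c p).mul
      (homogeneousComponent_isHomogeneous d q)), if_pos rfl]
  rw [h1, h2, h3, zero_add, zero_add]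

lemma hc_prod (s : Finset (Fin k)) (f : Fin k → P k) (a : Fin k →₀ ℕ)
    (hdeg : ∀ j, (f j).totalDegree ≤ a j) :
    homogeneousComponent (∑ j ∈ s, a j) (∏ j ∈ s, f j)
      = ∏ j ∈ s, homogeneousComponent (a j) (f j) := by
  induction s using Finset.induction_on with
  | empty => simp [homogeneousComponent_zero]
  | @insert j s hj ih =>
    rw [Finset.sum_insert hj, Finset.prod_insert hj, Finset.prod_insert hj,
      hc_top_mul (hdeg j) (le_trans (totalDegree_finset_prod s f)
        (Finset.sum_le_sum (fun i _ => hdeg i))), ih]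

end Comp

section SqStruct
variable {k : ℕ}

lemma prod_X_pow_eq (a : Fin k →₀ ℕ) :
    (∏ j, (X j : P k) ^ a j) = monomial a 1 := by
  rw [monomial_eq, C_1, one_mul, Finsupp.prod_fintype]
  intro j; rfl

lemma Sq_monomial (a : Fin k →₀ ℕ) (r : ZMod 2) :
    SqTotal k (monomial a r) = monomial a r * ∏ j, (1 + X j) ^ a j := by
  rw [SqTotal, aeval_monomial, Finsupp.prod_fintype _ _ (fun j => pow_zero _)]
  have h2 : ∀ j : Fin k, (X j + X j ^ 2 : P k) ^ a j = X j ^ a j * (1 + X j) ^ a j := by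
    intro j
    rw [← mul_pow]
    congr 1
    ring
  rw [Finset.prod_congr rfl (fun j _ => h2 j), Finset.prod_mul_distrib, prod_X_pow_eq]
  rw [show (algebraMap (ZMod 2) (P k)) r = C r from rfl, ← mul_assoc, C_mul_monomial, mul_one]

lemma totalDegree_one_add_X_pow (j : Fin k) (e : ℕ) :
    ((1 + X j : P k) ^ e).totalDegree ≤ e := by
  refine le_trans (totalDegree_pow _ _) ?_
  have h1 : (1 + X j : P k).totalDegree ≤ 1 := by
    refine le_trans (totalDegree_add _ _) ?_
    simp [totalDegree_one, totalDegree_X]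
  calc e * (1 + X j : P k).totalDegree ≤ e * 1 := Nat.mul_le_mul_left e h1
  _ = e := by ring

lemma hc_monomial (n : ℕ) (a : Fin k →₀ ℕ) (r : ZMod 2) :
    homogeneousComponent n (monomial a r) = if a.degree = n then monomial a r else 0 := by
  by_cases h : a.degree = n
  · rw [if_pos h, hc_of_homog (isHomogeneous_monomial r h), if_pos rfl]
  · rw [if_neg h]
    apply homogeneousComponent_eq_zero'
    intro d hd
    have : d = a := by
      rw [MvPolynomial.mem_support_iff, coeff_monomial] at hd
      by_cases hda : a = d
      · exact hda.symm
      · rw [if_neg hda] at hd; exact absurd rfl hd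
    rw [this]; exact h

lemma coeff_zero_prod_one_add (a : Fin k →₀ ℕ) :
    coeff 0 (∏ j, (1 + X j : P k) ^ a j) = 1 := by
  have : coeff (0 : Fin k →₀ ℕ) (∏ j, (1 + X j : P k) ^ a j)
      = constantCoeff (∏ j, (1 + X j : P k) ^ a j) := rfl
  rw [this, map_prod]
  have h1 : ∀ j : Fin k, constantCoeff ((1 + X j : P k) ^ a j) = 1 := by
    intro j
    rw [map_pow, map_add, map_one, constantCoeff_X, add_zero, one_pow]
  rw [Finset.prod_congr rfl (fun j _ => h1 j), Finset.prod_const_one]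

lemma hc_one_add_X_pow (j : Fin k) (e : ℕ) :
    homogeneousComponent e ((1 + X j : P k) ^ e) = X j ^ e := by
  rw [add_pow, map_sum]
  have heach : ∀ i ∈ Finset.range (e + 1),
      homogeneousComponent e ((1 : P k) ^ i * X j ^ (e - i) * (e.choose i : P k))
        = if i = 0 then X j ^ e else 0 := by
    intro i hi
    rw [Finset.mem_range] at hi
    rw [one_pow, one_mul, X_pow_eq_monomial,
      show ((e.choose i : ℕ) : P k) = C ((e.choose i : ℕ) : ZMod 2) by rw [C_eq_coe_nat],
      mul_comm, C_mul_monomial, hc_monomial, deg_single]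
    by_cases hi0 : i = 0
    · subst hi0
      rw [if_pos (by omega), if_pos rfl, Nat.sub_zero, Nat.choose_zero_right,
        Nat.cast_one, mul_one, X_pow_eq_monomial]
    · rw [if_neg (by omega), if_neg hi0]
  rw [Finset.sum_congr rfl heach, Finset.sum_ite_eq' (Finset.range (e+1)) 0 (fun _ => X j ^ e),
    if_pos (by simp)]

lemma supp_monomial_sub {a d : Fin k →₀ ℕ} {r : ZMod 2}
    (hd : d ∈ (monomial a r).support) : d = a := by
  rw [MvPolynomial.mem_support_iff, coeff_monomial] at hd
  by_cases hda : a = d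
  · exact hda.symm
  · rw [if_neg hda] at hd; exact absurd rfl hd

lemma hc_Sq_low {p : P k} {m : ℕ} (h : p.IsHomogeneous m) {n : ℕ} (hn : n < m) :
    homogeneousComponent n (SqTotal k p) = 0 := by
  conv_lhs => rw [as_sum p]
  rw [map_sum, map_sum]
  refine Finset.sum_eq_zero (fun a ha => ?_)
  rw [Sq_monomial]
  apply homogeneousComponent_eq_zero'
  intro e he
  obtain ⟨e1, he1, e2, he2, hee⟩ := Finset.mem_add.mp (support_mul _ _ he)
  have he1' : e1 = a := supp_monomial_sub he1
  have hadeg : a.degree = m := deg_of_homog h (MvPolynomial.mem_support_iff.mp ha)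
  rw [← hee, deg_add, he1', hadeg]
  omega

lemma hc_Sq_bot {p : P k} {m : ℕ} (h : p.IsHomogeneous m) :
    homogeneousComponent m (SqTotal k p) = p := by
  conv_lhs => rw [as_sum p]
  rw [map_sum, map_sum]
  have heach : ∀ a ∈ p.support,
      homogeneousComponent m (SqTotal k (monomial a (coeff a p))) = monomial a (coeff a p) := by
    intro a ha
    have hadeg : a.degree = m := deg_of_homog h (MvPolynomial.mem_support_iff.mp ha)
    rw [Sq_monomial, mul_comm (monomial a (coeff a p)) _, ← hadeg,
      show a.degree = 0 + a.degree by omega,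
      hc_mul_homog (isHomogeneous_monomial _ rfl) _ 0,
      homogeneousComponent_zero, coeff_zero_prod_one_add, C_1, one_mul]
  rw [Finset.sum_congr rfl heach, ← as_sum]

lemma hc_Sq_top {p : P k} {m : ℕ} (h : p.IsHomogeneous m) :
    homogeneousComponent (2 * m) (SqTotal k p) = p ^ 2 := by
  conv_lhs => rw [as_sum p]
  conv_rhs => rw [as_sum p, sum_sq]
  rw [map_sum, map_sum]
  refine Finset.sum_congr rfl (fun a ha => ?_)
  have hadeg : a.degree = m := deg_of_homog h (MvPolynomial.mem_support_iff.mp ha)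
  rw [Sq_monomial, mul_comm (monomial a (coeff a p)) _, show 2 * m = m + m by omega, ← hadeg,
    hc_mul_homog (isHomogeneous_monomial _ rfl) _ a.degree]
  have hprod : homogeneousComponent a.degree (∏ j, (1 + X j : P k) ^ a j) = monomial a 1 := by
    rw [deg_univ, hc_prod Finset.univ _ a (fun j => totalDegree_one_add_X_pow j (a j))]
    rw [Finset.prod_congr rfl (fun j _ => hc_one_add_X_pow j (a j)), prod_X_pow_eq]
  rw [hprod, pow_two, monomial_mul, monomial_mul, one_mul]
  congr 1
  have : coeff a p * coeff a p = coeff a p := by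
    have h2 := ZMod.pow_card (coeff a p)
    rwa [pow_two] at h2
  rw [this]

end SqStruct

section PsiSq
variable {k : ℕ}

lemma psi_monomial_mul_sq (u v : Fin k →₀ ℕ) (r s : ZMod 2) :
    psi k (monomial u r * (monomial v s) ^ 2)
      = psi k (monomial u r) * monomial v s := by
  rw [pow_two, monomial_mul, monomial_mul, psi_monomial, psi_monomial]
  have hodd : (∀ j, Odd ((u + (v + v)) j)) ↔ (∀ j, Odd (u j)) := by
    refine forall_congr' (fun j => ?_)
    simp only [Finsupp.add_apply, Nat.odd_iff]
    omega
  by_cases h : ∀ j, Odd (u j)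
  · rw [if_pos (hodd.mpr h), if_pos h]
    have h1 : hlf (u + (v + v)) = hlf u + v := by
      ext j; simp only [hlf_apply, Finsupp.add_apply]; omega
    have h2 : s * s = s := by
      have := ZMod.pow_card s; rwa [pow_two] at this
    rw [h1, monomial_mul, h2]
  · rw [if_neg (fun hh => h (hodd.mp hh)), if_neg h, zero_mul]

lemma psi_mul_sq (p w : P k) : psi k (p * w ^ 2) = psi k p * w := by
  induction w using MvPolynomial.induction_on' with
  | monomial v s =>
    induction p using MvPolynomial.induction_on' with
    | monomial u r => exact psi_monomial_mul_sq u v r s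
    | add p q hp hq => rw [add_mul, map_add, hp, hq, map_add, add_mul]
  | add w1 w2 h1 h2 =>
    rw [add_pow_char, mul_add, map_add, h1, h2, mul_add]

/-- all exponents of variable j appearing in p are even -/
def EvenAt (j : Fin k) (p : P k) : Prop := ∀ e ∈ p.support, Even (e j)

lemma supp_one_sub {e : Fin k →₀ ℕ} (he : e ∈ (1 : P k).support) : e = 0 := by
  by_cases h0 : (0 : Fin k →₀ ℕ) = e
  · exact h0.symm
  · rw [MvPolynomial.mem_support_iff, coeff_one, if_neg h0] at he
    exact absurd rfl he

lemma supp_X_sub {l : Fin k} {e : Fin k →₀ ℕ} (he : e ∈ (X l : P k).support) :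
    e = Finsupp.single l 1 := by
  rw [support_X] at he
  simpa using he

lemma EvenAt_mul {j : Fin k} {p q : P k} (hp : EvenAt j p) (hq : EvenAt j q) :
    EvenAt j (p * q) := by
  intro e he
  obtain ⟨e1, he1, e2, he2, hee⟩ := Finset.mem_add.mp (support_mul _ _ he)
  rw [← hee, Finsupp.add_apply]
  exact (hp e1 he1).add (hq e2 he2)

lemma EvenAt_one {j : Fin k} : EvenAt j (1 : P k) := by
  intro e he
  simp [supp_one_sub he]

lemma EvenAt_pow {j : Fin k} {p : P k} (hp : EvenAt j p) (n : ℕ) : EvenAt j (p ^ n) := by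
  induction n with
  | zero => simpa using EvenAt_one
  | succ n ih => rw [pow_succ]; exact EvenAt_mul ih hp

lemma EvenAt_prod {j : Fin k} (s : Finset (Fin k)) (f : Fin k → P k)
    (h : ∀ l ∈ s, EvenAt j (f l)) : EvenAt j (∏ l ∈ s, f l) := by
  induction s using Finset.induction_on with
  | empty => simpa using EvenAt_one
  | @insert i s hi ih =>
    rw [Finset.prod_insert hi]
    exact EvenAt_mul (h i (Finset.mem_insert_self i s))
      (ih (fun l hl => h l (Finset.mem_insert_of_mem hl)))

lemma EvenAt_sq {j : Fin k} (w : P k) : EvenAt j (w ^ 2) := by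
  induction w using MvPolynomial.induction_on' with
  | monomial v s =>
    rw [pow_two, monomial_mul]
    intro e he
    have : e = v + v := supp_monomial_sub he
    rw [this, Finsupp.add_apply]
    exact Even.add_self _
  | add w1 w2 h1 h2 =>
    rw [add_pow_char]
    intro e he
    rcases Finset.mem_union.mp (support_add he) with h | h
    · exact h1 e h
    · exact h2 e h

lemma EvenAt_one_add_X {j l : Fin k} (hjl : l ≠ j) : EvenAt j ((1 + X l : P k)) := by
  intro e he
  rcases Finset.mem_union.mp (support_add he) with h | h
  · simp [supp_one_sub h]
  · rw [supp_X_sub h, Finsupp.single_apply, if_neg hjl]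
    exact Even.zero

lemma EvenAt_one_add_X_pow_even {j : Fin k} {e : ℕ} (he : Even e) :
    EvenAt j ((1 + X j : P k) ^ e) := by
  obtain ⟨t, ht⟩ := he
  have : (1 + X j : P k) ^ e = ((1 + X j) ^ 2) ^ t := by
    rw [← pow_mul]; congr 1; omega
  rw [this, add_pow_char, one_pow]
  apply EvenAt_pow
  intro d hd
  rcases Finset.mem_union.mp (support_add hd) with h | h
  · simp [supp_one_sub h]
  · rw [X_pow_eq_monomial] at h
    rw [supp_monomial_sub h, Finsupp.single_apply, if_pos rfl]
    exact even_two

lemma EvenAt_Sq_monomial {a : Fin k →₀ ℕ} {r : ZMod 2} {j : Fin k} (hj : Even (a j)) :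
    EvenAt j (SqTotal k (monomial a r)) := by
  rw [Sq_monomial]
  apply EvenAt_mul
  · intro e he
    rw [supp_monomial_sub he]
    exact hj
  · apply EvenAt_prod
    intro l _
    by_cases hlj : l = j
    · subst hlj
      exact EvenAt_one_add_X_pow_even hj
    · exact EvenAt_pow (EvenAt_one_add_X hlj) _

end PsiSq

section KeyIdentity
variable {k : ℕ}

/-- indicator exponent vector of a finset -/
noncomputable def indic (S : Finset (Fin k)) : Fin k →₀ ℕ := ∑ j ∈ S, Finsupp.single j 1

lemma indic_apply (S : Finset (Fin k)) (l : Fin k) :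
    indic S l = if l ∈ S then 1 else 0 := by
  rw [indic, Finset.sum_apply']
  rw [Finset.sum_congr rfl (fun j (_ : j ∈ S) => (Finsupp.single_apply : _))]
  exact Finset.sum_ite_eq' S l (fun _ => 1)

lemma indic_insert {i : Fin k} {s : Finset (Fin k)} (hi : i ∉ s) :
    indic (insert i s) = Finsupp.single i 1 + indic s := by
  rw [indic, indic, Finset.sum_insert hi]

lemma deg_indic (S : Finset (Fin k)) : (indic S).degree = S.card := by
  rw [deg_univ]
  rw [Finset.sum_congr rfl (fun j (_ : j ∈ Finset.univ) => indic_apply S j)]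
  simp

lemma prod_X_eq (S : Finset (Fin k)) : (∏ j ∈ S, (X j : P k)) = monomial (indic S) 1 := by
  induction S using Finset.induction_on with
  | empty => rw [Finset.prod_empty, indic, Finset.sum_empty, monomial_zero', C_1]
  | @insert i s hi ih =>
    rw [Finset.prod_insert hi, ih, show (X i : P k) = monomial (Finsupp.single i 1) 1 from rfl,
      monomial_mul, one_mul, indic_insert hi]

lemma psi_Sq_c : psi k (SqTotal k (monomial (indic Finset.univ) 1)) = 1 := by
  rw [Sq_monomial]
  have h1 : ∀ j : Fin k, (1 + X j : P k) ^ (indic Finset.univ j) = 1 + X j := by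
    intro j
    rw [indic_apply, if_pos (Finset.mem_univ j), pow_one]
  rw [Finset.prod_congr rfl (fun j _ => h1 j), Finset.prod_add]
  have h2 : ∀ T ∈ (Finset.univ : Finset (Fin k)).powerset,
      (monomial (indic Finset.univ) (1 : ZMod 2)) *
          ((∏ _j ∈ T, (1 : P k)) * ∏ j ∈ Finset.univ \ T, X j)
        = monomial (indic Finset.univ + indic (Finset.univ \ T)) 1 := by
    intro T _
    rw [Finset.prod_const_one, one_mul, prod_X_eq, monomial_mul, one_mul]
  rw [Finset.mul_sum, Finset.sum_congr rfl h2, map_sum]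
  have h3 : ∀ T ∈ (Finset.univ : Finset (Fin k)).powerset,
      psi k (monomial (indic Finset.univ + indic (Finset.univ \ T)) (1 : ZMod 2))
        = if T = Finset.univ then 1 else 0 := by
    intro T _
    rw [psi_monomial]
    by_cases hT : T = Finset.univ
    · subst hT
      have hcond : ∀ j : Fin k,
          Odd (((indic Finset.univ + indic (Finset.univ \ Finset.univ)) : Fin k →₀ ℕ) j) := by
        intro j
        simp only [Finsupp.add_apply, indic_apply, Finset.sdiff_self, Finset.mem_univ, if_pos]
        simp [Nat.odd_iff]
      rw [if_pos hcond, if_pos rfl]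
      have h0 : hlf (indic Finset.univ + indic (Finset.univ \ Finset.univ)) = (0 : Fin k →₀ ℕ) := by
        ext j
        simp only [hlf_apply, Finsupp.add_apply, indic_apply, Finset.sdiff_self, Finset.mem_univ,
          if_pos]
        simp
      rw [h0, monomial_zero', C_1]
    · rw [if_neg hT, if_neg]
      intro hodd
      obtain ⟨j, hj⟩ : ∃ j, j ∉ T := by
        by_contra hall
        push_neg at hall
        exact hT (Finset.eq_univ_iff_forall.mpr hall)
      have := hodd j
      rw [Finsupp.add_apply, indic_apply, indic_apply, if_pos (Finset.mem_univ j),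
        if_pos (Finset.mem_sdiff.mpr ⟨Finset.mem_univ j, hj⟩)] at this
      simp [Nat.odd_iff] at this
  rw [Finset.sum_congr rfl h3,
    Finset.sum_ite_eq' (Finset.univ : Finset (Fin k)).powerset Finset.univ (fun _ => (1 : P k)),
    if_pos (Finset.mem_powerset_self _)]

end KeyIdentity

section LemmaI
variable {k : ℕ}

lemma monomial_split (a : Fin k →₀ ℕ) (r : ZMod 2) :
    monomial a r = C r * monomial (a.mapRange (· % 2) (Nat.zero_mod 2)) 1
      * (monomial (hlf a) 1) ^ 2 := by
  rw [pow_two, monomial_mul, C_mul_monomial, monomial_mul]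
  have h1 : (a.mapRange (· % 2) (Nat.zero_mod 2)) + (hlf a + hlf a) = a := by
    ext j
    simp only [Finsupp.add_apply, Finsupp.mapRange_apply, hlf_apply]
    omega
  rw [h1, mul_one, mul_one, mul_one]

lemma psi_Sq (p : P k) : psi k (SqTotal k p) = SqTotal k (psi k p) := by
  induction p using MvPolynomial.induction_on' with
  | add p q hp hq => rw [map_add, map_add, hp, hq, map_add, map_add]
  | monomial a r =>
    by_cases h : ∀ j, Odd (a j)
    · have heps : a.mapRange (· % 2) (Nat.zero_mod 2) = indic Finset.univ := by
        ext j
        have := h j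
        rw [Nat.odd_iff] at this
        simp only [Finsupp.mapRange_apply, indic_apply, if_pos (Finset.mem_univ j)]
        omega
      have hCr : SqTotal k (C r) = C r := by
        have : (C r : P k) = algebraMap (ZMod 2) (P k) r := rfl
        rw [this, AlgHom.commutes]
      have hSq : SqTotal k (C r * monomial (indic Finset.univ) 1 * (monomial (hlf a) 1) ^ 2)
          = (C r * SqTotal k (monomial (indic Finset.univ) 1))
            * (SqTotal k (monomial (hlf a) 1)) ^ 2 := by
        rw [map_mul, map_mul, map_pow, hCr]
      conv_lhs => rw [monomial_split a r, heps]
      rw [hSq, psi_mul_sq]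
      rw [show (C r : P k) * SqTotal k (monomial (indic Finset.univ) 1)
          = r • SqTotal k (monomial (indic Finset.univ) 1) from (smul_eq_C_mul _ r).symm,
        map_smul, psi_Sq_c]
      rw [psi_monomial, if_pos h]
      have : monomial (hlf a) r = r • monomial (hlf a) (1 : ZMod 2) := by
        rw [smul_eq_C_mul, C_mul_monomial, mul_one]
      rw [this, map_smul, smul_mul_assoc, one_mul]
    · push_neg at h
      obtain ⟨j0, hj0⟩ := h
      have heven : Even (a j0) := Nat.not_odd_iff_even.mp hj0
      rw [psi_monomial, if_neg (fun hall => hj0 (hall j0)), map_zero]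
      apply psi_eq_zero_of_even
      intro e he
      exact ⟨j0, fun hodd => (Nat.not_odd_iff_even.mpr (EvenAt_Sq_monomial heven e he)) hodd⟩

lemma part1 (k d : ℕ) :
    ∀ f ∈ hitSubmodule k (2 * d + k), psi k f ∈ hitSubmodule k d := by
  intro f hf
  induction hf using Submodule.span_induction with
  | mem x hx =>
    obtain ⟨m, hm, g, hg, rfl⟩ := hx
    rw [psi_hc, psi_Sq]
    by_cases hz : psi k g = 0
    · rw [hz, map_zero, map_zero]
      exact Submodule.zero_mem _
    · obtain ⟨m', hm', hhom⟩ := psi_homog (mem_homogeneousSubmodule m g |>.mp hg) hz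
      exact Submodule.subset_span
        ⟨m', by omega, psi k g, (mem_homogeneousSubmodule _ _).mpr hhom, rfl⟩
  | zero => rw [map_zero]; exact Submodule.zero_mem _
  | add x y _ _ hx hy => rw [map_add]; exact Submodule.add_mem _ hx hy
  | smul c x _ hx => rw [map_smul]; exact Submodule.smul_mem _ c hx

end LemmaI

section LemmaW
variable {k : ℕ}

lemma mu_le {n s : ℕ} (u : Fin s → ℕ) (hu : ∀ i, 0 < u i) (h : n = ∑ i, (2 ^ u i - 1)) :
    mu n ≤ s :=
  Nat.sInf_le ⟨u, hu, h⟩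

/-- support elements of the auxiliary product have degree a sum of `S.card` powers of 2 -/
lemma V_supp_deg (N : ℕ) (S : Finset (Fin k)) :
    ∀ e ∈ (∏ j ∈ S, (∑ i ∈ Finset.range (N + 1), (X j : P k) ^ (2 ^ i))).support,
      ∃ ii : Fin k → ℕ, e.degree = ∑ j ∈ S, 2 ^ (ii j) := by
  induction S using Finset.induction_on with
  | empty =>
    intro e he
    rw [Finset.prod_empty] at he
    rw [supp_one_sub he]
    exact ⟨fun _ => 0, by simp [map_zero]⟩
  | @insert j s hj ih =>
    intro e he
    rw [Finset.prod_insert hj] at he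
    obtain ⟨e1, he1, e2, he2, hee⟩ := Finset.mem_add.mp (support_mul _ _ he)
    have he1' : ∃ i0 : ℕ, e1.degree = 2 ^ i0 := by
      have := MvPolynomial.support_sum he1
      rw [Finset.mem_biUnion] at this
      obtain ⟨i0, _, hmem⟩ := this
      rw [X_pow_eq_monomial] at hmem
      exact ⟨i0, by rw [supp_monomial_sub hmem, deg_single]⟩
    obtain ⟨i0, hi0⟩ := he1'
    obtain ⟨ii, hii⟩ := ih e2 he2
    refine ⟨Function.update ii j i0, ?_⟩
    rw [← hee, deg_add, hi0, hii, Finset.sum_insert hj, Function.update_self]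
    congr 1
    refine Finset.sum_congr rfl (fun l hl => ?_)
    rw [Function.update_of_ne (fun hlj => hj (by rw [← hlj]; exact hl)) i0 ii]

/-- **Peterson–Wood style key lemma**: a monomial whose number of odd exponents
is less than `mu n` is hit. -/
theorem lemmaW {n : ℕ} (a : Fin k →₀ ℕ) (r : ZMod 2) (hdeg : a.degree = n)
    (hs : (Finset.univ.filter fun j : Fin k => Odd (a j)).card < mu n) :
    monomial a r ∈ hitSubmodule k n := by
  classical
  set S : Finset (Fin k) := Finset.univ.filter fun j => Odd (a j) with hS
  set s : ℕ := S.card with hscard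
  set bb : Fin k →₀ ℕ := hlf a with hbb
  set m : ℕ := bb.degree with hm
  set z : P k := monomial bb r with hz
  have hzhom : z.IsHomogeneous m := isHomogeneous_monomial r rfl
  have hsplit : indic S + (bb + bb) = a := by
    ext j
    simp only [Finsupp.add_apply, indic_apply, hbb, hlf_apply, hS, Finset.mem_filter,
      Finset.mem_univ, true_and]
    by_cases hjS : Odd (a j)
    · rw [if_pos hjS]
      rw [Nat.odd_iff] at hjS
      omega
    · rw [if_neg hjS]
      rw [Nat.odd_iff] at hjS
      omega
  have hnsm : n = s + 2 * m := by
    have := congrArg Finsupp.degree hsplit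
    rw [deg_add, deg_add, deg_indic, hdeg, ← hscard, ← hm] at this
    omega
  -- the auxiliary polynomial
  set N : ℕ := n with hN
  set V : P k := ∏ j ∈ S, (∑ i ∈ Finset.range (N + 1), (X j : P k) ^ (2 ^ i)) with hV
  set W : P k := V * z with hW
  -- route A : the degree-n component of Sq W is our monomial
  have hSqV : SqTotal k V = ∏ j ∈ S, ((X j : P k) + X j ^ (2 ^ (N + 1))) := by
    rw [hV, map_prod]
    refine Finset.prod_congr rfl (fun j _ => ?_)
    rw [map_sum]
    have heach : ∀ i ∈ Finset.range (N + 1),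
        SqTotal k ((X j : P k) ^ (2 ^ i)) = X j ^ (2 ^ i) + X j ^ (2 ^ (i + 1)) := by
      intro i _
      rw [map_pow]
      have hXj : SqTotal k (X j : P k) = X j + X j ^ 2 := by
        rw [SqTotal, aeval_X]
      rw [hXj, add_pow_char_pow]
      congr 1
      rw [← pow_mul]
      congr 1
      rw [pow_succ]
      ring
    rw [Finset.sum_congr rfl heach]
    -- telescoping
    have htel : ∀ M : ℕ, (∑ i ∈ Finset.range M, ((X j : P k) ^ (2 ^ i) + X j ^ (2 ^ (i + 1))))
        = if M = 0 then 0 else X j ^ (2 ^ 0) + X j ^ (2 ^ M) := by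
      intro M
      induction M with
      | zero => simp
      | succ M ihM =>
        rw [Finset.sum_range_succ, ihM, if_neg (Nat.succ_ne_zero M)]
        by_cases hM0 : M = 0
        · subst hM0
          simp
        · rw [if_neg hM0]
          have hXX : (X j : P k) ^ 2 ^ M + X j ^ 2 ^ M = 0 := CharTwo.add_self_eq_zero _
          abel_nf
          rw [show (2 : ℤ) • (X j ^ 2 ^ M : P k) = X j ^ 2 ^ M + X j ^ 2 ^ M by
            rw [two_zsmul], hXX, zero_add]
      -- end
    rw [htel (N + 1), if_neg (Nat.succ_ne_zero N), pow_zero, pow_one]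

  have h2N : n < 2 ^ (N + 1) := by
    have h1 : n < 2 ^ n := Nat.lt_two_pow_self
    have h2 : (2:ℕ) ^ n ≤ 2 ^ (N + 1) := Nat.pow_le_pow_right (by omega) (by omega)
    omega
  have hc_zero_of_bigpow : ∀ (j : Fin k) (q : P k),
      homogeneousComponent n ((X j : P k) ^ (2 ^ (N + 1)) * q) = 0 := by
    intro j q
    apply homogeneousComponent_eq_zero'
    intro e he
    obtain ⟨e1, he1, e2, he2, hee⟩ := Finset.mem_add.mp (support_mul _ _ he)
    rw [X_pow_eq_monomial] at he1
    rw [← hee, deg_add, supp_monomial_sub he1, deg_single]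
    omega
  -- route A : the degree-n component of Sq W is our monomial
  have hRouteA : homogeneousComponent n (SqTotal k W) = monomial a r := by
    rw [hW, map_mul, hSqV, Finset.prod_add, Finset.sum_mul, map_sum]
    have heach : ∀ T ∈ S.powerset,
        homogeneousComponent n ((∏ j ∈ T, (X j : P k))
            * (∏ j ∈ S \ T, (X j : P k) ^ (2 ^ (N + 1))) * SqTotal k z)
          = if T = S then monomial a r else 0 := by
      intro T hT
      rw [Finset.mem_powerset] at hT
      by_cases hTS : T = S
      · subst hTS
        rw [if_pos rfl, Finset.sdiff_self, Finset.prod_empty, mul_one, prod_X_eq]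
        have hind : (monomial (indic S) (1 : ZMod 2)).IsHomogeneous s := by
          refine isHomogeneous_monomial 1 ?_
          rw [deg_indic]
        rw [show n = s + 2 * m from hnsm, hc_homog_mul hind (SqTotal k z) (2 * m),
          hc_Sq_top hzhom, hz, pow_two, monomial_mul, monomial_mul]
        have hr : (1 : ZMod 2) * (r * r) = r := by
          have := ZMod.pow_card r
          rw [pow_two] at this
          rw [one_mul, this]
        rw [hr, hsplit]
      · rw [if_neg hTS]
        obtain ⟨j, hjS, hjT⟩ := Finset.exists_of_ssubset (ssubset_of_subset_of_ne hT hTS)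
        have hjmem : j ∈ S \ T := Finset.mem_sdiff.mpr ⟨hjS, hjT⟩
        rw [← Finset.mul_prod_erase (S \ T) _ hjmem]
        rw [show (∏ l ∈ T, (X l : P k))
              * ((X j : P k) ^ (2 ^ (N + 1)) * ∏ l ∈ (S \ T).erase j, (X l : P k) ^ (2 ^ (N + 1)))
              * SqTotal k z
            = (X j : P k) ^ (2 ^ (N + 1)) * ((∏ l ∈ T, (X l : P k))
              * (∏ l ∈ (S \ T).erase j, (X l : P k) ^ (2 ^ (N + 1))) * SqTotal k z) from by ring]
        exact hc_zero_of_bigpow j _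
    rw [Finset.sum_congr rfl heach, Finset.sum_ite_eq' S.powerset S (fun _ => monomial a r),
      if_pos (Finset.mem_powerset_self S)]
  -- the mu-condition kills the degree-n component of W
  have hVn : homogeneousComponent (s + m) V = 0 := by
    by_contra hne
    have hsupp : (homogeneousComponent (s + m) V).support.Nonempty :=
      Finset.nonempty_iff_ne_empty.mpr (fun hemp => hne (support_eq_empty.mp hemp))
    obtain ⟨e, he⟩ := hsupp
    obtain ⟨ii, hii⟩ := V_supp_deg N S e (supp_hc_subset _ _ he)
    have hdeg_e : e.degree = s + m := supp_hc_deg he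
    have hmu : mu N ≤ s := by
      refine mu_le (fun idx => ii ((S.equivFin.symm idx) : Fin k) + 1)
        (fun i => Nat.succ_pos _) ?_
      have hsum : ∑ idx : Fin S.card, (2 ^ (ii ((S.equivFin.symm idx) : Fin k) + 1) - 1)
          = ∑ j ∈ S, (2 ^ (ii j + 1) - 1) :=
        (Equiv.sum_comp S.equivFin.symm
          (fun (x : {x // x ∈ S}) => 2 ^ (ii x + 1) - 1)).trans
          (Finset.sum_coe_sort S (fun j => 2 ^ (ii j + 1) - 1))
      show N = ∑ idx : Fin S.card, (2 ^ (ii ((S.equivFin.symm idx) : Fin k) + 1) - 1)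
      rw [hsum]
      have h1 : ∑ j ∈ S, (2 ^ (ii j + 1) - 1) + s = ∑ j ∈ S, 2 ^ (ii j + 1) := by
        rw [hscard, Finset.card_eq_sum_ones S, ← Finset.sum_add_distrib]
        refine Finset.sum_congr rfl (fun j _ => ?_)
        have : 1 ≤ 2 ^ (ii j + 1) := Nat.one_le_two_pow
        omega
      have h2 : ∑ j ∈ S, 2 ^ (ii j + 1) = 2 * (s + m) := by
        rw [← hdeg_e, hii, Finset.mul_sum]
        refine Finset.sum_congr rfl (fun j _ => ?_)
        rw [pow_succ]
        ring
      omega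
    omega
  -- route B : decompose W into homogeneous components
  have hfinal : monomial a r = ∑ c ∈ Finset.range (W.totalDegree + 1),
      homogeneousComponent n (SqTotal k (homogeneousComponent c W)) := by
    calc monomial a r = homogeneousComponent n (SqTotal k W) := hRouteA.symm
    _ = homogeneousComponent n (SqTotal k (∑ c ∈ Finset.range (W.totalDegree + 1),
          homogeneousComponent c W)) := by rw [sum_homogeneousComponent]
    _ = ∑ c ∈ Finset.range (W.totalDegree + 1),
          homogeneousComponent n (SqTotal k (homogeneousComponent c W)) := by
        rw [map_sum, map_sum]
  rw [hfinal]
  refine Submodule.sum_mem _ (fun c _ => ?_)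
  rcases lt_trichotomy c n with hcn | hcn | hcn
  · exact Submodule.subset_span ⟨c, hcn, homogeneousComponent c W,
      (mem_homogeneousSubmodule _ _).mpr (homogeneousComponent_isHomogeneous c W), rfl⟩
  · subst hcn
    rw [hc_Sq_bot (homogeneousComponent_isHomogeneous c W)]
    have : homogeneousComponent c W = homogeneousComponent (s + m) V * z := by
      rw [hW, show c = (s + m) + m from by omega, hc_mul_homog hzhom V (s + m)]
    rw [this, hVn, zero_mul]
    exact Submodule.zero_mem _
  · rw [hc_Sq_low (homogeneousComponent_isHomogeneous c W) hcn]
    exact Submodule.zero_mem _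

end LemmaW

section Quot
variable {k : ℕ}

lemma hit_le_homog (n : ℕ) :
    hitSubmodule k n ≤ homogeneousSubmodule (Fin k) (ZMod 2) n := by
  rw [hitSubmodule, Submodule.span_le]
  rintro f ⟨m, hm, g, hg, rfl⟩
  exact (mem_homogeneousSubmodule _ _).mpr (homogeneousComponent_isHomogeneous _ _)

lemma off_le_ker (n : ℕ) :
    offDegree k n ≤ LinearMap.ker (homogeneousComponent n :
      P k →ₗ[ZMod 2] P k) := by
  rw [offDegree]
  refine iSup_le (fun m => iSup_le (fun hm => fun p hp => ?_))
  rw [LinearMap.mem_ker, hc_of_homog ((mem_homogeneousSubmodule _ _).mp hp),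
    if_neg (fun hnm => hm hnm.symm)]

lemma homog_le_off {m n : ℕ} (hm : m ≠ n) :
    homogeneousSubmodule (Fin k) (ZMod 2) m ≤ offDegree k n := by
  rw [offDegree]
  exact le_iSup_of_le m (le_iSup_of_le hm le_rfl)

lemma mkQ_hc (n : ℕ) (p : P k) :
    (hitTotal k n).mkQ (homogeneousComponent n p) = (hitTotal k n).mkQ p := by
  rw [Submodule.mkQ_apply, Submodule.mkQ_apply]
  rw [Submodule.Quotient.eq]
  have : homogeneousComponent n p - p ∈ offDegree k n := by
    set M : ℕ := max p.totalDegree n + 1 with hM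
    have hsum : ∑ c ∈ Finset.range (M + 1), homogeneousComponent c p = p := by
      have hz : ∀ c ∈ Finset.range (M + 1), c ∉ Finset.range (p.totalDegree + 1) →
          homogeneousComponent c p = 0 := by
        intro c _ hc
        rw [Finset.mem_range, not_lt] at hc
        exact homogeneousComponent_eq_zero c p (by omega)
      exact ((Finset.sum_subset
        (Finset.range_subset_range.mpr (by omega : p.totalDegree + 1 ≤ M + 1)) hz).symm).trans
        (sum_homogeneousComponent p)
    have hnM : n ∈ Finset.range (M + 1) := Finset.mem_range.mpr (by omega)
    have : p - homogeneousComponent n p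
        = ∑ c ∈ (Finset.range (M + 1)).erase n, homogeneousComponent c p := by
      rw [eq_comm, eq_sub_iff_add_eq, Finset.sum_erase_add _ _ hnM, hsum]
    rw [show homogeneousComponent n p - p = -(p - homogeneousComponent n p) by ring, this]
    refine Submodule.neg_mem _ (Submodule.sum_mem _ (fun c hc => ?_))
    exact homog_le_off (Finset.ne_of_mem_erase hc)
      ((mem_homogeneousSubmodule _ _).mpr (homogeneousComponent_isHomogeneous c p))
  exact Submodule.mem_sup_right this

lemma evenish_hit {n : ℕ} (hmu : k ≤ mu n) {p : P k} (hp : p.IsHomogeneous n)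
    (he : ∀ e ∈ p.support, ∃ j, ¬ Odd (e j)) : p ∈ hitSubmodule k n := by
  rw [as_sum p]
  refine Submodule.sum_mem _ (fun e hes => ?_)
  refine lemmaW e (coeff e p) (deg_of_homog hp (MvPolynomial.mem_support_iff.mp hes)) ?_
  obtain ⟨j, hj⟩ := he e hes
  have hss : (Finset.univ.filter fun j : Fin k => Odd (e j)) ⊂ Finset.univ := by
    refine Finset.ssubset_univ_iff.mpr (fun hU => ?_)
    have : j ∈ Finset.univ.filter fun j : Fin k => Odd (e j) := by
      rw [hU]; exact Finset.mem_univ j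
    rw [Finset.mem_filter] at this
    exact hj this.2
  have := Finset.card_lt_card hss
  rw [Finset.card_univ, Fintype.card_fin] at this
  omega

/-- the top class x_1 ⋯ x_k -/
noncomputable def cp (k : ℕ) : P k := monomial (indic Finset.univ) 1

lemma cp_homog : (cp k).IsHomogeneous k := by
  refine isHomogeneous_monomial 1 ?_
  rw [deg_indic, Finset.card_univ, Fintype.card_fin]

lemma psi_cp : psi k (cp k) = 1 := by
  rw [cp, psi_monomial, if_pos (fun j => by
    rw [indic_apply, if_pos (Finset.mem_univ j)]; exact odd_one)]
  have h0 : hlf (indic (Finset.univ : Finset (Fin k))) = 0 := by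
    ext j
    rw [hlf_apply, indic_apply, if_pos (Finset.mem_univ j)]
    rfl
  rw [h0, monomial_zero', C_1]

lemma psi_cp_sq (w : P k) : psi k (cp k * w ^ 2) = w := by
  rw [psi_mul_sq, psi_cp, one_mul]

lemma coeff_cp_sq {e : Fin k →₀ ℕ} (he : ∀ j, Odd (e j)) (w : P k) :
    coeff e (cp k * w ^ 2) = coeff (hlf e) w := by
  conv_rhs => rw [← psi_cp_sq w]
  rw [coeff_psi, dbl1_hlf he]

lemma supp_add_cp_psi (f : P k) :
    ∀ e ∈ (f + cp k * (psi k f) ^ 2).support, ∃ j, ¬ Odd (e j) := by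
  intro e hes
  by_contra hall
  push_neg at hall
  rw [MvPolynomial.mem_support_iff, coeff_add, coeff_cp_sq hall, coeff_psi,
    dbl1_hlf hall, CharTwo.add_self_eq_zero] at hes
  exact hes rfl

end Quot

section UpHit
variable {k : ℕ}

lemma Sq_cp : SqTotal k (cp k) = cp k * ∏ j, (1 + X j : P k) := by
  rw [cp, Sq_monomial]
  congr 1
  refine Finset.prod_congr rfl (fun j _ => ?_)
  rw [indic_apply, if_pos (Finset.mem_univ j), pow_one]

lemma Q_expand : (∏ j, (1 + X j : P k))
    = ∑ T ∈ (Finset.univ : Finset (Fin k)).powerset, monomial (indic (Finset.univ \ T)) 1 := by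
  rw [Finset.prod_add]
  refine Finset.sum_congr rfl (fun T _ => ?_)
  rw [Finset.prod_const_one, one_mul, prod_X_eq]

lemma supp_Q_le : ∀ e ∈ (∏ j, (1 + X j : P k)).support, ∀ j, e j ≤ 1 := by
  intro e he j
  rw [Q_expand] at he
  have := MvPolynomial.support_sum he
  rw [Finset.mem_biUnion] at this
  obtain ⟨T, _, hmem⟩ := this
  rw [supp_monomial_sub hmem, indic_apply]
  split_ifs <;> omega

lemma coeff_top_Sq_cp : coeff (indic Finset.univ) (SqTotal k (cp k)) = 1 := by
  rw [Sq_cp, cp]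
  have hmm := coeff_monomial_mul (0 : Fin k →₀ ℕ) (indic Finset.univ) (1 : ZMod 2)
    (∏ j, (1 + X j : P k))
  rw [add_zero] at hmm
  rw [hmm, one_mul]
  have hcz := coeff_zero_prod_one_add (k := k) (indic Finset.univ)
  have hQ : (∏ j, (1 + X j : P k) ^ (indic (Finset.univ : Finset (Fin k))) j)
      = ∏ j, (1 + X j : P k) := by
    refine Finset.prod_congr rfl (fun j _ => ?_)
    rw [indic_apply, if_pos (Finset.mem_univ j), pow_one]
  rw [hQ] at hcz
  exact hcz

lemma supp_cq : ∀ e1 ∈ (SqTotal k (cp k) + cp k).support, ∃ j, Even (e1 j) := by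
  intro e1 he1
  have hco : coeff (indic Finset.univ) (SqTotal k (cp k) + cp k) = 0 := by
    rw [coeff_add, coeff_top_Sq_cp, cp, coeff_monomial, if_pos rfl, CharTwo.add_self_eq_zero]
  have hne : e1 ≠ indic Finset.univ := by
    intro hh
    rw [MvPolynomial.mem_support_iff, hh, hco] at he1
    exact he1 rfl
  have he1' : e1 ∈ (SqTotal k (cp k)).support := by
    rcases Finset.mem_union.mp (support_add he1) with h | h
    · exact h
    · exact absurd (supp_monomial_sub h) hne
  rw [Sq_cp] at he1'
  obtain ⟨u, hu, e', he', hee⟩ := Finset.mem_add.mp (support_mul _ _ he1')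
  have hu' : u = indic Finset.univ := supp_monomial_sub hu
  have hne' : e' ≠ 0 := by
    intro h0
    apply hne
    rw [← hee, hu', h0, add_zero]
  obtain ⟨j, hj⟩ := Finsupp.ne_iff.mp hne'
  rw [Finsupp.coe_zero, Pi.zero_apply] at hj
  have hle := supp_Q_le e' he' j
  refine ⟨j, ?_⟩
  rw [← hee, Finsupp.add_apply, hu', indic_apply, if_pos (Finset.mem_univ j)]
  have : e' j = 1 := by omega
  rw [this]
  exact even_two

lemma up_hit {d : ℕ} (hmu : k ≤ mu (2 * d + k)) {g : P k} (hg : g ∈ hitSubmodule k d) :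
    cp k * g ^ 2 ∈ hitSubmodule k (2 * d + k) := by
  induction hg using Submodule.span_induction with
  | zero =>
    rw [show ((0 : P k) ^ 2) = 0 from zero_pow (by omega), mul_zero]
    exact Submodule.zero_mem _
  | add x y _ _ ihx ihy =>
    rw [add_pow_char, mul_add]
    exact Submodule.add_mem _ ihx ihy
  | smul r x _ ihx =>
    have hrx : (r • x) ^ 2 = r • x ^ 2 := by
      rw [smul_pow, ZMod.pow_card]
    rw [hrx, mul_smul_comm]
    exact Submodule.smul_mem _ r ihx
  | mem x hx =>
    obtain ⟨m0, hm0, h, hh, rfl⟩ := hx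
    have hhom : h.IsHomogeneous m0 := (mem_homogeneousSubmodule _ _).mp hh
    set n : ℕ := 2 * d + k with hn
    set g : P k := homogeneousComponent d (SqTotal k h) with hgdef
    set cq : P k := SqTotal k (cp k) + cp k with hcq
    have hkey : homogeneousComponent n (SqTotal k (cp k * h ^ 2))
        = cp k * g ^ 2 + homogeneousComponent n (cq * (SqTotal k h) ^ 2) := by
      rw [map_mul, map_pow]
      have hSqcp : SqTotal k (cp k) = cp k + cq := by
        rw [hcq]
        calc SqTotal k (cp k) = SqTotal k (cp k) + (cp k + cp k) := by
              rw [CharTwo.add_self_eq_zero, add_zero]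
        _ = cp k + (SqTotal k (cp k) + cp k) := by ring
      rw [hSqcp, add_mul, map_add]
      congr 1
      rw [show n = k + 2 * d from by omega, hc_homog_mul cp_homog _ (2 * d), hc_sq]
    have hre : cp k * g ^ 2 = homogeneousComponent n (SqTotal k (cp k * h ^ 2))
        + homogeneousComponent n (cq * (SqTotal k h) ^ 2) := by
      rw [hkey, add_assoc, CharTwo.add_self_eq_zero, add_zero]
    rw [hre]
    refine Submodule.add_mem _ ?_ ?_
    · refine Submodule.subset_span ⟨k + m0 * 2, by omega, cp k * h ^ 2,
        (mem_homogeneousSubmodule _ _).mpr (cp_homog.mul (hhom.pow 2)), rfl⟩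
    · refine evenish_hit (by omega) (homogeneousComponent_isHomogeneous n _)
        (fun e hes => ?_)
      obtain ⟨e1, he1, e2, he2, hee⟩ := Finset.mem_add.mp
        (support_mul _ _ (supp_hc_subset n _ hes))
      obtain ⟨j, hj⟩ := supp_cq e1 he1
      have hj2 : Even (e2 j) := EvenAt_sq (SqTotal k h) e2 he2
      refine ⟨j, fun hodd => ?_⟩
      rw [← hee, Finsupp.add_apply] at hodd
      rw [Nat.odd_iff] at hodd
      rw [Nat.even_iff] at hj hj2
      omega

lemma down_extract {d : ℕ} {q : P k} (hq : q ∈ hitTotal k d) (hhom : q.IsHomogeneous d) :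
    q ∈ hitSubmodule k d := by
  obtain ⟨y, hy, z, hz, rfl⟩ := Submodule.mem_sup.mp hq
  have h1 : homogeneousComponent d (y + z) = y := by
    rw [map_add, hc_of_homog ((mem_homogeneousSubmodule _ _).mp (hit_le_homog d hy)),
      if_pos rfl]
    have : homogeneousComponent d z = 0 := off_le_ker d hz
    rw [this, add_zero]
  rw [hc_of_homog hhom, if_pos rfl] at h1
  rw [h1]
  exact hy

end UpHit
/-- Kameko's theorem. `ψ` sends hit homogeneous polynomials of degree
`2d + k` to hit homogeneous polynomials of degree `d`, hence induces an `𝔽₂`-linear map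
`(QP_k)_{2d+k} → (QP_k)_d`; moreover, if `μ(2d+k) = k`, this induced map is an
isomorphism of `𝔽₂`-vector spaces. -/
theorem statement1 (k d : ℕ) (hk : 1 ≤ k) :
    (∀ f ∈ hitSubmodule k (2 * d + k), psi k f ∈ hitSubmodule k d) ∧
    ∃ κ : QP k (2 * d + k) →ₗ[ZMod 2] QP k d,
      IsKameko k (2 * d + k) d κ ∧ (mu (2 * d + k) = k → Function.Bijective κ) := by
  refine ⟨part1 k d, ?_⟩
  set Φ : P k →ₗ[ZMod 2] QP k d :=
    (hitTotal k d).mkQ.comp ((psi k).comp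
      (homogeneousComponent (2 * d + k) : P k →ₗ[ZMod 2] P k)) with hΦ
  have hΦ_apply : ∀ p : P k,
      Φ p = (hitTotal k d).mkQ (psi k (homogeneousComponent (2 * d + k) p)) := by
    intro p
    rw [hΦ]
    simp only [LinearMap.comp_apply]
  have hker : hitTotal k (2 * d + k) ≤ LinearMap.ker Φ := by
    rw [hitTotal]
    refine sup_le ?_ ?_
    · intro h hh
      rw [LinearMap.mem_ker, hΦ_apply,
        hc_of_homog ((mem_homogeneousSubmodule _ _).mp (hit_le_homog _ hh)), if_pos rfl,
        Submodule.mkQ_apply, Submodule.Quotient.mk_eq_zero]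
      exact Submodule.mem_sup_left (part1 k d h hh)
    · intro z hz
      rw [LinearMap.mem_ker, hΦ_apply, show homogeneousComponent (2 * d + k) z = 0
        from off_le_ker _ hz, map_zero, map_zero]
  refine ⟨(hitTotal k (2 * d + k)).liftQ Φ hker, ?_, ?_⟩
  · intro f hf
    rw [Submodule.mkQ_apply, Submodule.liftQ_apply, hΦ_apply,
      hc_of_homog ((mem_homogeneousSubmodule _ _).mp hf), if_pos rfl, Submodule.mkQ_apply]
  · intro hmu
    constructor
    · -- injectivity
      refine (injective_iff_map_eq_zero _).mpr (fun x hx => ?_)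
      obtain ⟨p, rfl⟩ := Submodule.mkQ_surjective _ x
      set f : P k := homogeneousComponent (2 * d + k) p with hf
      have hκ : (hitTotal k (2 * d + k)).liftQ Φ hker ((hitTotal k (2 * d + k)).mkQ p)
          = (hitTotal k d).mkQ (psi k f) := by
        rw [Submodule.mkQ_apply, Submodule.liftQ_apply, hΦ_apply]
      rw [hκ, Submodule.mkQ_apply, Submodule.Quotient.mk_eq_zero] at hx
      have hfhom : f.IsHomogeneous (2 * d + k) := homogeneousComponent_isHomogeneous _ _
      have hmem2 : cp k * (psi k f) ^ 2 ∈ hitSubmodule k (2 * d + k) := by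
        by_cases hpz : psi k f = 0
        · rw [hpz, zero_pow (two_ne_zero), mul_zero]
          exact Submodule.zero_mem _
        · obtain ⟨m', hm', hhom'⟩ := psi_homog hfhom hpz
          have hm'd : m' = d := by omega
          exact up_hit (by omega) (down_extract hx (hm'd ▸ hhom'))
      have hmem1 : f + cp k * (psi k f) ^ 2 ∈ hitSubmodule k (2 * d + k) := by
        refine evenish_hit (by omega) ?_ (supp_add_cp_psi f)
        by_cases hpz : psi k f = 0
        · rw [hpz, zero_pow (two_ne_zero), mul_zero, add_zero]
          exact hfhom
        · obtain ⟨m', hm', hhom'⟩ := psi_homog hfhom hpz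
          have hm'd : m' = d := by omega
          have hcg : (cp k * (psi k f) ^ 2).IsHomogeneous (2 * d + k) := by
            have h1 := cp_homog.mul ((hm'd ▸ hhom').pow 2)
            have h2 : k + d * 2 = 2 * d + k := by omega
            exact h2 ▸ h1
          exact hfhom.add hcg
      have hfmem : f ∈ hitSubmodule k (2 * d + k) := by
        have hsplit : f = (f + cp k * (psi k f) ^ 2) + cp k * (psi k f) ^ 2 := by
          rw [add_assoc, CharTwo.add_self_eq_zero, add_zero]
        rw [hsplit]
        exact Submodule.add_mem _ hmem1 hmem2
      rw [show (hitTotal k (2 * d + k)).mkQ p = (hitTotal k (2 * d + k)).mkQ f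
        from (mkQ_hc _ p).symm, Submodule.mkQ_apply, Submodule.Quotient.mk_eq_zero]
      exact Submodule.mem_sup_left hfmem
    · -- surjectivity
      intro y
      obtain ⟨p, rfl⟩ := Submodule.mkQ_surjective _ y
      set g : P k := homogeneousComponent d p with hg
      refine ⟨(hitTotal k (2 * d + k)).mkQ (cp k * g ^ 2), ?_⟩
      have hghom : (cp k * g ^ 2).IsHomogeneous (2 * d + k) := by
        have h1 := cp_homog.mul ((homogeneousComponent_isHomogeneous d p).pow 2)
        have h2 : k + d * 2 = 2 * d + k := by omega
        exact h2 ▸ h1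
      rw [Submodule.mkQ_apply, Submodule.liftQ_apply, hΦ_apply, hc_of_homog hghom,
        if_pos rfl, psi_cp_sq]
      exact mkQ_hc d p
end

section
/- For every k ≥ 1 and every n ≥ 0, the cohit space (QP_k)_n is the internal direct sum of (QP_k^0)_n and (QP_k^+)_n; that is, the images in (QP_k)_n of the degree-n homogeneous parts of P_k^0 and of P_k^+ have trivial intersection and together span (QP_k)_n. -/
open MvPolynomial

noncomputable def piPlus (k : ℕ) : P k →ₗ[ZMod 2] P k :=
  (Finsupp.lsum (ZMod 2) fun a : Fin k →₀ ℕ =>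
    if ∀ j, a j ≠ 0 then monomial a else 0) ∘ₗ
    (AddMonoidAlgebra.coeffLinearEquiv (ZMod 2)).toLinearMap

theorem piPlus_monomial (k : ℕ) (a : Fin k →₀ ℕ) (c : ZMod 2) :
    piPlus k (monomial a c) = if ∀ j, a j ≠ 0 then monomial a c else 0 := by
  classical
  have this : piPlus k (monomial a c) =
      (if ∀ j, a j ≠ 0 then monomial a else 0 : ZMod 2 →ₗ[ZMod 2] P k) c :=
    sum_monomial_eq <| map_zero _
  rw [this]
  split_ifs <;> simp

theorem sq_monomial (k : ℕ) (a : Fin k →₀ ℕ) :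
    SqTotal k (monomial a 1) = monomial a 1 * ∏ j ∈ a.support, (1 + X j) ^ (a j) := by
  rw [SqTotal, aeval_monomial, monomial_eq]
  simp only [map_one, one_mul, C_1, Finsupp.prod]
  rw [← Finset.prod_mul_distrib]
  apply Finset.prod_congr rfl
  intro j _
  rw [← mul_pow]; ring

theorem piPlus_eq_self {k : ℕ} {p : P k} (h : ∀ b ∈ p.support, ∀ j, b j ≠ 0) :
    piPlus k p = p := by
  conv_lhs => rw [p.as_sum]
  rw [map_sum]
  conv_rhs => rw [p.as_sum]
  apply Finset.sum_congr rfl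
  intro b hb
  rw [piPlus_monomial, if_pos (h b hb)]

theorem piPlus_eq_zero {k : ℕ} {p : P k} (h : ∀ b ∈ p.support, ∃ j, b j = 0) :
    piPlus k p = 0 := by
  conv_lhs => rw [p.as_sum]
  rw [map_sum]
  apply Finset.sum_eq_zero
  intro b hb
  rw [piPlus_monomial, if_neg]
  push_neg
  obtain ⟨j, hj⟩ := h b hb
  exact ⟨j, hj⟩

theorem sq_support_zero {k : ℕ} (a : Fin k →₀ ℕ) {j : Fin k} (hj : a j = 0)
    {b : Fin k →₀ ℕ} (hb : b ∈ (SqTotal k (monomial a 1)).support) : b j = 0 := by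
  classical
  by_contra hbj
  have hjv : j ∈ (SqTotal k (monomial a 1)).vars :=
    (mem_vars j).mpr ⟨b, hb, Finsupp.mem_support_iff.mpr hbj⟩
  have hsub : (SqTotal k (monomial a 1)).vars ⊆ a.support := by
    rw [sq_monomial]
    refine (vars_mul _ _).trans ?_
    apply Finset.union_subset
    · exact (vars_monomial one_ne_zero).le.trans le_rfl
    · refine (vars_prod _).trans ?_
      intro i hi
      simp only [Finset.mem_biUnion] at hi
      obtain ⟨l, hl, hil⟩ := hi
      have := (vars_pow _ _) hil
      have h1 : (1 + X l : P k).vars ⊆ {l} := by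
        refine (vars_add_subset _ _).trans ?_
        simp [vars_X]
      have := h1 this
      simp only [Finset.mem_singleton] at this
      subst this; exact hl
  have := hsub hjv
  rw [Finsupp.mem_support_iff] at this
  exact this hj

theorem sq_support_le {k : ℕ} (a : Fin k →₀ ℕ)
    {b : Fin k →₀ ℕ} (hb : b ∈ (SqTotal k (monomial a 1)).support) : a ≤ b := by
  rw [MvPolynomial.mem_support_iff, sq_monomial] at hb
  by_contra hab
  rw [coeff_monomial_mul' b a 1 _, if_neg hab] at hb
  exact hb rfl

theorem piPlus_sq_comm (k : ℕ) (p : P k) :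
    piPlus k (SqTotal k p) = SqTotal k (piPlus k p) := by
  induction p using MvPolynomial.induction_on' with
  | monomial a c =>
    have hc : (monomial a c : P k) = c • monomial a 1 := by
      rw [smul_monomial, smul_eq_mul, mul_one]
    have key : piPlus k (SqTotal k (monomial a 1)) = SqTotal k (piPlus k (monomial a 1)) := by
      by_cases h : ∀ j : Fin k, a j ≠ 0
      · rw [piPlus_monomial, if_pos h, piPlus_eq_self]
        intro b hb j hbj
        have := sq_support_le a hb j
        rw [hbj, Nat.le_zero] at this
        exact h j this
      · push_neg at h
        obtain ⟨j, hj⟩ := h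
        rw [piPlus_monomial, if_neg (by push_neg; exact ⟨j, hj⟩), map_zero,
          piPlus_eq_zero (fun b hb => ⟨j, sq_support_zero a hj hb⟩)]
    calc piPlus k (SqTotal k (monomial a c))
        = c • piPlus k (SqTotal k (monomial a 1)) := by rw [hc, map_smul, map_smul]
      _ = c • SqTotal k (piPlus k (monomial a 1)) := by rw [key]
      _ = SqTotal k (piPlus k (monomial a c)) := by rw [hc, map_smul, map_smul]
  | add p q hp hq => simp only [map_add, hp, hq]

theorem coeff_piPlus {k : ℕ} (b : Fin k →₀ ℕ) (p : P k) :
    coeff b (piPlus k p) = if ∀ j, b j ≠ 0 then coeff b p else 0 := by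
  classical
  induction p using MvPolynomial.induction_on' with
  | monomial a c =>
    rw [piPlus_monomial]
    by_cases hab : a = b
    · subst hab
      split_ifs with h1 <;> simp [coeff_monomial]
    · split_ifs with h1 h2 h2 <;> simp [coeff_monomial, Ne.symm hab, hab]
  | add p q hp hq =>
    rw [map_add, coeff_add, coeff_add, hp, hq]
    split_ifs <;> simp

theorem piPlus_homogeneous {k m : ℕ} {p : P k}
    (h : p ∈ homogeneousSubmodule (Fin k) (ZMod 2) m) :
    piPlus k p ∈ homogeneousSubmodule (Fin k) (ZMod 2) m := by
  rw [mem_homogeneousSubmodule] at *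
  intro d hd
  rw [coeff_piPlus] at hd
  apply h
  intro h0
  rw [h0] at hd
  simp at hd

theorem piPlus_hc {k n : ℕ} (p : P k) :
    piPlus k (homogeneousComponent n p) = homogeneousComponent n (piPlus k p) := by
  ext b
  rw [coeff_piPlus, coeff_homogeneousComponent, coeff_homogeneousComponent, coeff_piPlus]
  split_ifs <;> rfl

theorem piPlus_hitSubmodule {k n : ℕ} {p : P k} (h : p ∈ hitSubmodule k n) :
    piPlus k p ∈ hitSubmodule k n := by
  induction h using Submodule.span_induction with
  | mem f hf =>
    obtain ⟨m, hm, g, hg, rfl⟩ := hf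
    rw [piPlus_hc, piPlus_sq_comm]
    exact Submodule.subset_span ⟨m, hm, piPlus k g, piPlus_homogeneous hg, rfl⟩
  | zero => simp
  | add x y _ _ hx hy => rw [map_add]; exact Submodule.add_mem _ hx hy
  | smul c x _ hx => rw [map_smul]; exact Submodule.smul_mem _ c hx

theorem piPlus_offDegree {k n : ℕ} {p : P k} (h : p ∈ offDegree k n) :
    piPlus k p ∈ offDegree k n := by
  have : offDegree k n ≤ (offDegree k n).comap (piPlus k) := by
    rw [offDegree]
    refine iSup_le fun m => iSup_le fun hm => ?_
    intro x hx
    refine Submodule.mem_comap.mpr ?_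
    have : homogeneousSubmodule (Fin k) (ZMod 2) m ≤
        ⨆ (m : ℕ) (_ : m ≠ n), homogeneousSubmodule (Fin k) (ZMod 2) m :=
      le_iSup_of_le m (le_iSup_of_le hm le_rfl)
    exact this (piPlus_homogeneous hx)
  exact this h

theorem piPlus_hitTotal {k n : ℕ} {p : P k} (h : p ∈ hitTotal k n) :
    piPlus k p ∈ hitTotal k n := by
  obtain ⟨y, hy, z, hz, rfl⟩ := Submodule.mem_sup.mp h
  rw [map_add]
  exact Submodule.add_mem _ (Submodule.mem_sup_left (piPlus_hitSubmodule hy))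
    (Submodule.mem_sup_right (piPlus_offDegree hz))

theorem piPlus_of_P0 {k : ℕ} {p : P k} (h : p ∈ P0 k) : piPlus k p = 0 := by
  induction h using Submodule.span_induction with
  | mem f hf =>
    obtain ⟨a, ⟨j, hj⟩, rfl⟩ := hf
    rw [piPlus_monomial, if_neg (by push_neg; exact ⟨j, hj⟩)]
  | zero => simp
  | add x y _ _ hx hy => rw [map_add, hx, hy, add_zero]
  | smul c x _ hx => rw [map_smul, hx, smul_zero]

theorem piPlus_of_Pplus {k : ℕ} {p : P k} (h : p ∈ Pplus k) : piPlus k p = p := by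
  induction h using Submodule.span_induction with
  | mem f hf =>
    obtain ⟨a, ha, rfl⟩ := hf
    rw [piPlus_monomial, if_pos ha]
  | zero => simp
  | add x y _ _ hx hy => rw [map_add, hx, hy]
  | smul c x _ hx => rw [map_smul, hx]

theorem piPlus_mem_Pplus {k : ℕ} (p : P k) : piPlus k p ∈ Pplus k := by
  induction p using MvPolynomial.induction_on' with
  | monomial a c =>
    rw [piPlus_monomial]
    split_ifs with h
    · have : (monomial a c : P k) = c • monomial a 1 := by
        rw [smul_monomial, smul_eq_mul, mul_one]
      rw [this]
      exact Submodule.smul_mem _ c (Submodule.subset_span ⟨a, h, rfl⟩)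
    · exact Submodule.zero_mem _
  | add p q hp hq => rw [map_add]; exact Submodule.add_mem _ hp hq

theorem sub_piPlus_mem_P0 {k : ℕ} (p : P k) : p - piPlus k p ∈ P0 k := by
  induction p using MvPolynomial.induction_on' with
  | monomial a c =>
    rw [piPlus_monomial]
    split_ifs with h
    · simp
    · push_neg at h
      rw [sub_zero]
      have : (monomial a c : P k) = c • monomial a 1 := by
        rw [smul_monomial, smul_eq_mul, mul_one]
      rw [this]
      exact Submodule.smul_mem _ c (Submodule.subset_span ⟨a, h, rfl⟩)
  | add p q hp hq =>
    have : p + q - piPlus k (p + q) = (p - piPlus k p) + (q - piPlus k q) := by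
      rw [map_add]; ring
    rw [this]
    exact Submodule.add_mem _ hp hq

theorem sub_hc_mem_offDegree {k n : ℕ} (p : P k) :
    p - homogeneousComponent n p ∈ offDegree k n := by
  induction p using MvPolynomial.induction_on' with
  | monomial a c =>
    have hmem : (monomial a c : P k) ∈ homogeneousSubmodule (Fin k) (ZMod 2) a.degree :=
      isHomogeneous_monomial c rfl
    rw [homogeneousComponent_of_mem hmem]
    split_ifs with h
    · simp
    · rw [sub_zero]
      have : homogeneousSubmodule (Fin k) (ZMod 2) a.degree ≤ offDegree k n :=
        le_iSup_of_le a.degree (le_iSup_of_le (fun he => h he.symm) le_rfl)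
      exact this hmem
  | add p q hp hq =>
    have : p + q - homogeneousComponent n (p + q) =
        (p - homogeneousComponent n p) + (q - homogeneousComponent n q) := by
      rw [map_add]; ring
    rw [this]
    exact Submodule.add_mem _ hp hq

/-- The cohit space `(QP_k)_n` is the internal direct sum of
`(QP_k^0)_n` and `(QP_k^+)_n`. -/
theorem statement3 (k n : ℕ) (hk : 1 ≤ k) :
    Q0 k n ⊓ Qplus k n = ⊥ ∧ Q0 k n ⊔ Qplus k n = ⊤ := by
  constructor
  · rw [eq_bot_iff]
    rintro x ⟨hx0, hxp⟩
    obtain ⟨f, ⟨hf0, hfn⟩, rfl⟩ := hx0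
    obtain ⟨g, ⟨hgP, hgn⟩, hfg⟩ := hxp
    have hdiff : g - f ∈ hitTotal k n := by
      exact (Submodule.Quotient.eq _).mp hfg
    have hg : g ∈ hitTotal k n := by
      have h2 := piPlus_hitTotal hdiff
      rw [map_sub, piPlus_of_Pplus hgP, piPlus_of_P0 hf0, sub_zero] at h2
      exact h2
    have : (hitTotal k n).mkQ g = 0 := (Submodule.Quotient.mk_eq_zero _).mpr hg
    rw [← hfg, this]
    exact Submodule.zero_mem ⊥
  · rw [eq_top_iff]
    intro x _
    obtain ⟨p, rfl⟩ := (hitTotal k n).mkQ_surjective x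
    set q := homogeneousComponent n p with hq
    have h1 : (hitTotal k n).mkQ p = (hitTotal k n).mkQ q := by
      rw [← sub_eq_zero, ← map_sub, Submodule.mkQ_apply, Submodule.Quotient.mk_eq_zero]
      exact Submodule.mem_sup_right (sub_hc_mem_offDegree p)
    have hqn : q ∈ homogeneousSubmodule (Fin k) (ZMod 2) n := homogeneousComponent_mem n p
    have h2 : (hitTotal k n).mkQ q =
        (hitTotal k n).mkQ (q - piPlus k q) + (hitTotal k n).mkQ (piPlus k q) := by
      rw [← map_add]; congr 1; ring
    rw [h1, h2]
    apply Submodule.add_mem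
    · apply Submodule.mem_sup_left
      exact ⟨q - piPlus k q, ⟨sub_piPlus_mem_P0 q,
        Submodule.sub_mem _ hqn (piPlus_homogeneous hqn)⟩, rfl⟩
    · apply Submodule.mem_sup_right
      exact ⟨piPlus k q, ⟨piPlus_mem_Pplus q, piPlus_homogeneous hqn⟩, rfl⟩
end
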